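/- arXiv:1706.09655 — 9 statements merged into one kernel-verified Lean document; each statement's English description precedes it below -/
import Mathlib

section
/- Weak duality for the hydropower problem: if D is an admissible feasible drain process and y = (γ_t, v_t, λ_t, w_t)_{t=1}^{T−1} is a dual feasible variable, then J(D) ≤ Φ(y). -/
open MeasureTheory Finset

noncomputable section

/-- Water level at time `t` induced by initial level `V1`, inflow `R` and drain `D`:
`V(t) = V(1) + ∑_{s=1}^{t-1} (R(s) - D(s))`. -/
def waterLevel {Ω : Type*} {N : ℕ} (V1 : Fin N → ℝ) (R D : ℕ → Ω → Fin N → ℝ)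
    (t : ℕ) (ω : Ω) (i : Fin N) : ℝ :=
  V1 i + ∑ s ∈ Finset.Ico 1 t, (R s ω i - D s ω i)

/-- Expected revenue `J(D) = E[∑_{t=1}^{T-1} D(t)·S(t+1) + α S(T)·V(T)]`. -/
def revenue {Ω : Type*} {N : ℕ} [MeasurableSpace Ω] (P : Measure Ω) (T : ℕ)
    (S R : ℕ → Ω → Fin N → ℝ) (V1 : Fin N → ℝ) (α : ℝ)
    (D : ℕ → Ω → Fin N → ℝ) : ℝ :=
  ∫ ω, (∑ t ∈ Finset.Ico 1 T, ∑ i, D t ω i * S (t + 1) ω i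
    + α * ∑ i, S T ω i * waterLevel V1 R D T ω i) ∂P

/-- A drain process is admissible if each `D(t)` is `G t`-measurable and bounded,
for `t = 1, …, T-1`. -/
def Admissible {Ω : Type*} {N : ℕ} (T : ℕ) (G : ℕ → MeasurableSpace Ω)
    (D : ℕ → Ω → Fin N → ℝ) : Prop :=
  ∀ t, 1 ≤ t → t ≤ T - 1 →
    Measurable[G t] (D t) ∧ ∃ C : ℝ, ∀ ω i, |D t ω i| ≤ C

/-- Feasibility: almost surely, `0 ≤ D(t) ≤ b` and `D(t) ≤ V(t) ≤ m`
componentwise for all `t = 1, …, T-1`. -/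
def FeasibleDrain {Ω : Type*} {N : ℕ} [MeasurableSpace Ω] (P : Measure Ω) (T : ℕ)
    (R : ℕ → Ω → Fin N → ℝ) (V1 b m : Fin N → ℝ)
    (D : ℕ → Ω → Fin N → ℝ) : Prop :=
  ∀ᵐ ω ∂P, ∀ t, 1 ≤ t → t ≤ T - 1 → ∀ i,
    0 ≤ D t ω i ∧ D t ω i ≤ b i ∧ D t ω i ≤ waterLevel V1 R D t ω i ∧
      waterLevel V1 R D t ω i ≤ m i

/-- A dual variable `y = (γ_t, v_t, λ_t, w_t)_{t=1}^{T-1}` consists of integrable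
maps `Ω → ℝ^N` which are almost surely nonnegative componentwise. -/
def IsDualVariable {Ω : Type*} {N : ℕ} [MeasurableSpace Ω] (P : Measure Ω) (T : ℕ)
    (gam v lam w : ℕ → Ω → Fin N → ℝ) : Prop :=
  (∀ t, 1 ≤ t → t ≤ T - 1 → ∀ i,
    Integrable (fun ω => gam t ω i) P ∧ Integrable (fun ω => v t ω i) P ∧
    Integrable (fun ω => lam t ω i) P ∧ Integrable (fun ω => w t ω i) P) ∧
  (∀ᵐ ω ∂P, ∀ t, 1 ≤ t → t ≤ T - 1 → ∀ i,
    0 ≤ gam t ω i ∧ 0 ≤ v t ω i ∧ 0 ≤ lam t ω i ∧ 0 ≤ w t ω i)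

/-- Dual feasibility: for every `t = 1, …, T-1` and every `A ∈ G_t`,
`∫_A (S(t+1) - α S(T) + γ_t - v_t - ∑_{s=t}^{T-1} λ_s + ∑_{s=t+1}^{T-1} w_s) dP = 0`
in `ℝ^N`. -/
def DualFeasible {Ω : Type*} {N : ℕ} [MeasurableSpace Ω] (P : Measure Ω) (T : ℕ)
    (G : ℕ → MeasurableSpace Ω) (S : ℕ → Ω → Fin N → ℝ) (α : ℝ)
    (gam v lam w : ℕ → Ω → Fin N → ℝ) : Prop :=
  ∀ t, 1 ≤ t → t ≤ T - 1 → ∀ A : Set Ω, MeasurableSet[G t] A → ∀ i,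
    ∫ ω in A, (S (t + 1) ω i - α * S T ω i + gam t ω i - v t ω i
      - ∑ s ∈ Finset.Icc t (T - 1), lam s ω i
      + ∑ s ∈ Finset.Icc (t + 1) (T - 1), w s ω i) ∂P = 0

/-- The dual value
`Φ(y) = α E[S(T)·V(1) + ∑_{t=1}^{T-1} S(T)·R(t)]
  + ∑_{t=1}^{T-1} E[λ_t·(V(1) + ∑_{s=1}^{t-1} R(s)) + v_t·b
  + w_t·(m - V(1) - ∑_{s=1}^{t-1} R(s))]`. -/
def dualValue {Ω : Type*} {N : ℕ} [MeasurableSpace Ω] (P : Measure Ω) (T : ℕ)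
    (S R : ℕ → Ω → Fin N → ℝ) (V1 b m : Fin N → ℝ) (α : ℝ)
    (v lam w : ℕ → Ω → Fin N → ℝ) : ℝ :=
  α * ∫ ω, (∑ i, S T ω i * V1 i
      + ∑ t ∈ Finset.Ico 1 T, ∑ i, S T ω i * R t ω i) ∂P
  + ∑ t ∈ Finset.Ico 1 T, ∫ ω,
      (∑ i, lam t ω i * (V1 i + ∑ s ∈ Finset.Ico 1 t, R s ω i)
       + ∑ i, v t ω i * b i
       + ∑ i, w t ω i * (m i - V1 i - ∑ s ∈ Finset.Ico 1 t, R s ω i)) ∂P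

section WeakDualityHelpers

variable {Ω : Type*} {mΩ : MeasurableSpace Ω} {P : Measure Ω} [IsProbabilityMeasure P]

lemma wd_int_of_bdd {f : Ω → ℝ} (hf : AEStronglyMeasurable f P) {C : ℝ}
    (h : ∀ ω, |f ω| ≤ C) : Integrable f P :=
  (integrable_const C).mono' hf (Filter.Eventually.of_forall fun ω => by
    simpa [Real.norm_eq_abs] using h ω)

lemma wd_int_mul_bdd {f g : Ω → ℝ} (hf : Integrable f P) (hg : AEStronglyMeasurable g P)
    {C : ℝ} (hC : ∀ ω, |g ω| ≤ C) : Integrable (fun ω => f ω * g ω) P :=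
  (hf.bdd_mul hg (c := C) (Filter.Eventually.of_forall fun ω => by simpa [Real.norm_eq_abs] using hC ω)).congr
    (Filter.Eventually.of_forall fun ω => mul_comm _ _)

lemma wd_zero_int : Integrable (0 : Ω → ℝ) P := integrable_zero _ _ P

lemma wd_orth {m : MeasurableSpace Ω} (hm : m ≤ mΩ) {f g : Ω → ℝ}
    (hf : Integrable f P) (hg : StronglyMeasurable[m] g) {C : ℝ}
    (hgC : ∀ ω, |g ω| ≤ C)
    (h0 : ∀ A : Set Ω, MeasurableSet[m] A → ∫ ω in A, f ω ∂P = 0) :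
    ∫ ω, g ω * f ω ∂P = 0 := by
  have hgf : Integrable (g * f) P :=
    hf.bdd_mul ((hg.mono hm).aestronglyMeasurable) (c := C) (Filter.Eventually.of_forall fun ω => by
      simpa [Real.norm_eq_abs] using hgC ω)
  have h0' : (0 : Ω → ℝ) =ᵐ[P] P[f|m] :=
    ae_eq_condExp_of_forall_setIntegral_eq hm hf
      (fun s _ _ => (wd_zero_int (P := P)).integrableOn)
      (fun s hs _ => by simp [h0 s hs])
      (stronglyMeasurable_const.aestronglyMeasurable)
  have hmul : P[g * f|m] =ᵐ[P] g * P[f|m] := condExp_mul_of_stronglyMeasurable_left hg hgf hf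
  have hz : P[g * f|m] =ᵐ[P] (fun _ => (0 : ℝ)) := by
    filter_upwards [hmul, h0'] with ω h1 h2
    simp only [h1, Pi.mul_apply]
    rw [← h2]
    simp
  have hfin : ∫ ω, (g * f) ω ∂P = 0 := by
    rw [← integral_condExp hm, integral_congr_ae hz]
    simp
  simpa [Pi.mul_apply] using hfin

end WeakDualityHelpers


lemma wd_rev_decomp {N K : ℕ} (Dv Rv Sv : ℕ → Fin N → ℝ) (V1 : Fin N → ℝ) (α : ℝ) :
    (∑ t ∈ Finset.Icc 1 K, ∑ i, Dv t i * Sv (t + 1) i)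
      + α * ∑ i, Sv (K + 1) i * (V1 i + ∑ s ∈ Finset.Icc 1 K, (Rv s i - Dv s i))
    = (∑ t ∈ Finset.Icc 1 K, ∑ i, Dv t i * (Sv (t + 1) i - α * Sv (K + 1) i))
      + α * (∑ i, Sv (K + 1) i * V1 i
          + ∑ t ∈ Finset.Icc 1 K, ∑ i, Sv (K + 1) i * Rv t i) := by
  have h1 : ∑ i, Sv (K + 1) i * (V1 i + ∑ s ∈ Finset.Icc 1 K, (Rv s i - Dv s i))
      = ∑ i, Sv (K + 1) i * V1 i + (∑ i, ∑ s ∈ Finset.Icc 1 K, Sv (K + 1) i * Rv s i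
        - ∑ i, ∑ s ∈ Finset.Icc 1 K, Sv (K + 1) i * Dv s i) := by
    simp only [mul_add, Finset.mul_sum, mul_sub, Finset.sum_add_distrib,
      Finset.sum_sub_distrib]
  have h2 : ∑ i, ∑ s ∈ Finset.Icc 1 K, Sv (K + 1) i * Rv s i
      = ∑ t ∈ Finset.Icc 1 K, ∑ i, Sv (K + 1) i * Rv t i := Finset.sum_comm
  have h3 : ∑ i, ∑ s ∈ Finset.Icc 1 K, Sv (K + 1) i * Dv s i
      = ∑ t ∈ Finset.Icc 1 K, ∑ i, Dv t i * Sv (K + 1) i := by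
    rw [Finset.sum_comm]
    exact Finset.sum_congr rfl fun t _ => Finset.sum_congr rfl fun i _ => mul_comm _ _
  have h4 : ∑ t ∈ Finset.Icc 1 K, ∑ i, Dv t i * (Sv (t + 1) i - α * Sv (K + 1) i)
      = (∑ t ∈ Finset.Icc 1 K, ∑ i, Dv t i * Sv (t + 1) i)
        - α * ∑ t ∈ Finset.Icc 1 K, ∑ i, Dv t i * Sv (K + 1) i := by
    rw [Finset.mul_sum, ← Finset.sum_sub_distrib]
    refine Finset.sum_congr rfl fun t _ => ?_
    rw [Finset.mul_sum, ← Finset.sum_sub_distrib]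
    refine Finset.sum_congr rfl fun i _ => ?_
    ring
  rw [h1, h2, h3, h4]
  ring

lemma wd_pointwise {N K : ℕ} (Dv gamv vv lamv wv Rv : ℕ → Fin N → ℝ)
    (V1 b m : Fin N → ℝ)
    (hfeas : ∀ t, 1 ≤ t → t ≤ K → ∀ i, 0 ≤ Dv t i ∧ Dv t i ≤ b i ∧
      Dv t i ≤ V1 i + ∑ s ∈ Finset.Ico 1 t, (Rv s i - Dv s i) ∧
      V1 i + ∑ s ∈ Finset.Ico 1 t, (Rv s i - Dv s i) ≤ m i)
    (hpos : ∀ t, 1 ≤ t → t ≤ K → ∀ i,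
      0 ≤ gamv t i ∧ 0 ≤ vv t i ∧ 0 ≤ lamv t i ∧ 0 ≤ wv t i) :
    ∑ t ∈ Finset.Icc 1 K, ∑ i, Dv t i *
        (vv t i - gamv t i + ∑ s ∈ Finset.Icc t K, lamv s i
          - ∑ s ∈ Finset.Icc (t + 1) K, wv s i)
      ≤ ∑ t ∈ Finset.Icc 1 K,
        (∑ i, lamv t i * (V1 i + ∑ s ∈ Finset.Ico 1 t, Rv s i) + ∑ i, vv t i * b i
          + ∑ i, wv t i * (m i - V1 i - ∑ s ∈ Finset.Ico 1 t, Rv s i)) := by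
  have hcum : ∀ t, 1 ≤ t → t ≤ K → ∀ i,
      ∑ u ∈ Finset.Icc 1 t, Dv u i ≤ V1 i + ∑ u ∈ Finset.Ico 1 t, Rv u i := by
    intro t h1 h2 i
    have h := (hfeas t h1 h2 i).2.2.1
    have hsub : ∑ s ∈ Finset.Ico 1 t, (Rv s i - Dv s i)
        = ∑ s ∈ Finset.Ico 1 t, Rv s i - ∑ s ∈ Finset.Ico 1 t, Dv s i :=
      Finset.sum_sub_distrib _ _
    have hsum : ∑ u ∈ Finset.Icc 1 t, Dv u i
        = ∑ u ∈ Finset.Ico 1 t, Dv u i + Dv t i := by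
      rw [← Finset.Ico_add_one_right_eq_Icc, Finset.sum_Ico_succ_top (by omega)]
    rw [hsum]; rw [hsub] at h; linarith
  have hcum2 : ∀ t, 1 ≤ t → t ≤ K → ∀ i,
      -(∑ u ∈ Finset.Ico 1 t, Dv u i) ≤ m i - V1 i - ∑ u ∈ Finset.Ico 1 t, Rv u i := by
    intro t h1 h2 i
    have h := (hfeas t h1 h2 i).2.2.2
    have hsub : ∑ s ∈ Finset.Ico 1 t, (Rv s i - Dv s i)
        = ∑ s ∈ Finset.Ico 1 t, Rv s i - ∑ s ∈ Finset.Ico 1 t, Dv s i :=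
      Finset.sum_sub_distrib _ _
    rw [hsub] at h; linarith
  have ha : (∑ t ∈ Finset.Icc 1 K, ∑ i, Dv t i *
        (vv t i - gamv t i + ∑ s ∈ Finset.Icc t K, lamv s i
          - ∑ s ∈ Finset.Icc (t + 1) K, wv s i))
      = ((∑ t ∈ Finset.Icc 1 K, ∑ i, Dv t i * vv t i)
          - ∑ t ∈ Finset.Icc 1 K, ∑ i, Dv t i * gamv t i
          + ∑ t ∈ Finset.Icc 1 K, ∑ i, ∑ s ∈ Finset.Icc t K, Dv t i * lamv s i)
        - ∑ t ∈ Finset.Icc 1 K, ∑ i, ∑ s ∈ Finset.Icc (t + 1) K, Dv t i * wv s i := by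
    simp only [mul_add, mul_sub, Finset.mul_sum, Finset.sum_add_distrib,
      Finset.sum_sub_distrib]
  have hA3 : ∑ t ∈ Finset.Icc 1 K, ∑ i, ∑ s ∈ Finset.Icc t K, Dv t i * lamv s i
      = ∑ s ∈ Finset.Icc 1 K, ∑ i, (∑ t ∈ Finset.Icc 1 s, Dv t i) * lamv s i :=
    calc ∑ t ∈ Finset.Icc 1 K, ∑ i, ∑ s ∈ Finset.Icc t K, Dv t i * lamv s i
        = ∑ t ∈ Finset.Icc 1 K, ∑ s ∈ Finset.Icc t K, ∑ i, Dv t i * lamv s i :=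
          Finset.sum_congr rfl fun t _ => Finset.sum_comm
      _ = ∑ s ∈ Finset.Icc 1 K, ∑ t ∈ Finset.Icc 1 s, ∑ i, Dv t i * lamv s i :=
          Finset.sum_comm' (fun t s => by simp only [Finset.mem_Icc]; omega)
      _ = ∑ s ∈ Finset.Icc 1 K, ∑ i, ∑ t ∈ Finset.Icc 1 s, Dv t i * lamv s i :=
          Finset.sum_congr rfl fun s _ => Finset.sum_comm
      _ = _ := Finset.sum_congr rfl fun s _ => Finset.sum_congr rfl fun i _ =>
          (Finset.sum_mul _ _ _).symm
  have hA4 : ∑ t ∈ Finset.Icc 1 K, ∑ i, ∑ s ∈ Finset.Icc (t + 1) K, Dv t i * wv s i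
      = ∑ s ∈ Finset.Icc 1 K, ∑ i, (∑ t ∈ Finset.Ico 1 s, Dv t i) * wv s i :=
    calc ∑ t ∈ Finset.Icc 1 K, ∑ i, ∑ s ∈ Finset.Icc (t + 1) K, Dv t i * wv s i
        = ∑ t ∈ Finset.Icc 1 K, ∑ s ∈ Finset.Icc (t + 1) K, ∑ i, Dv t i * wv s i :=
          Finset.sum_congr rfl fun t _ => Finset.sum_comm
      _ = ∑ s ∈ Finset.Icc 1 K, ∑ t ∈ Finset.Ico 1 s, ∑ i, Dv t i * wv s i :=
          Finset.sum_comm' (fun t s => by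
            simp only [Finset.mem_Icc, Finset.mem_Ico]; omega)
      _ = ∑ s ∈ Finset.Icc 1 K, ∑ i, ∑ t ∈ Finset.Ico 1 s, Dv t i * wv s i :=
          Finset.sum_congr rfl fun s _ => Finset.sum_comm
      _ = _ := Finset.sum_congr rfl fun s _ => Finset.sum_congr rfl fun i _ =>
          (Finset.sum_mul _ _ _).symm
  have hb1 : (∑ t ∈ Finset.Icc 1 K, ∑ i, Dv t i * vv t i)
      ≤ ∑ t ∈ Finset.Icc 1 K, ∑ i, vv t i * b i :=
    Finset.sum_le_sum fun t ht => Finset.sum_le_sum fun i _ => by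
      obtain ⟨h1, h2⟩ := Finset.mem_Icc.mp ht
      calc Dv t i * vv t i ≤ b i * vv t i :=
            mul_le_mul_of_nonneg_right (hfeas t h1 h2 i).2.1 (hpos t h1 h2 i).2.1
        _ = vv t i * b i := mul_comm _ _
  have hb2 : (0:ℝ) ≤ ∑ t ∈ Finset.Icc 1 K, ∑ i, Dv t i * gamv t i :=
    Finset.sum_nonneg fun t ht => Finset.sum_nonneg fun i _ => by
      obtain ⟨h1, h2⟩ := Finset.mem_Icc.mp ht
      exact mul_nonneg (hfeas t h1 h2 i).1 (hpos t h1 h2 i).1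
  have hb3 : (∑ s ∈ Finset.Icc 1 K, ∑ i, (∑ t ∈ Finset.Icc 1 s, Dv t i) * lamv s i)
      ≤ ∑ s ∈ Finset.Icc 1 K, ∑ i, lamv s i * (V1 i + ∑ u ∈ Finset.Ico 1 s, Rv u i) :=
    Finset.sum_le_sum fun s hs => Finset.sum_le_sum fun i _ => by
      obtain ⟨h1, h2⟩ := Finset.mem_Icc.mp hs
      calc (∑ t ∈ Finset.Icc 1 s, Dv t i) * lamv s i
          ≤ (V1 i + ∑ u ∈ Finset.Ico 1 s, Rv u i) * lamv s i :=
            mul_le_mul_of_nonneg_right (hcum s h1 h2 i) (hpos s h1 h2 i).2.2.1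
        _ = lamv s i * (V1 i + ∑ u ∈ Finset.Ico 1 s, Rv u i) := mul_comm _ _
  have hb4 : -(∑ s ∈ Finset.Icc 1 K, ∑ i, (∑ t ∈ Finset.Ico 1 s, Dv t i) * wv s i)
      ≤ ∑ s ∈ Finset.Icc 1 K, ∑ i, wv s i * (m i - V1 i - ∑ u ∈ Finset.Ico 1 s, Rv u i) := by
    rw [← Finset.sum_neg_distrib]
    refine Finset.sum_le_sum fun s hs => ?_
    rw [← Finset.sum_neg_distrib]
    refine Finset.sum_le_sum fun i _ => ?_
    obtain ⟨h1, h2⟩ := Finset.mem_Icc.mp hs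
    calc -((∑ t ∈ Finset.Ico 1 s, Dv t i) * wv s i)
        = (-(∑ t ∈ Finset.Ico 1 s, Dv t i)) * wv s i := by ring
      _ ≤ (m i - V1 i - ∑ u ∈ Finset.Ico 1 s, Rv u i) * wv s i :=
          mul_le_mul_of_nonneg_right (hcum2 s h1 h2 i) (hpos s h1 h2 i).2.2.2
      _ = wv s i * (m i - V1 i - ∑ u ∈ Finset.Ico 1 s, Rv u i) := mul_comm _ _
  have hrhs : ∑ t ∈ Finset.Icc 1 K,
        (∑ i, lamv t i * (V1 i + ∑ s ∈ Finset.Ico 1 t, Rv s i) + ∑ i, vv t i * b i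
          + ∑ i, wv t i * (m i - V1 i - ∑ s ∈ Finset.Ico 1 t, Rv s i))
      = (∑ t ∈ Finset.Icc 1 K, ∑ i, lamv t i * (V1 i + ∑ s ∈ Finset.Ico 1 t, Rv s i))
        + (∑ t ∈ Finset.Icc 1 K, ∑ i, vv t i * b i)
        + ∑ t ∈ Finset.Icc 1 K, ∑ i, wv t i * (m i - V1 i - ∑ s ∈ Finset.Ico 1 t, Rv s i) := by
    simp only [Finset.sum_add_distrib]
  rw [ha, hA3, hA4, hrhs]
  linarith

/-- **Weak duality for the hydropower problem**: if `D` is an admissible feasible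
drain process and `y = (γ, v, λ, w)` is a dual feasible variable, then
`J(D) ≤ Φ(y)`. -/

theorem weak_duality {Ω : Type*} {mΩ : MeasurableSpace Ω}
    (P : Measure Ω) [IsProbabilityMeasure P]
    (T N : ℕ) (hT : 2 ≤ T) (hN : 1 ≤ N)
    (G : ℕ → MeasurableSpace Ω)
    (hG_mono : ∀ s t, s ≤ t → G s ≤ G t) (hG_le : ∀ t, G t ≤ mΩ)
    (S R : ℕ → Ω → Fin N → ℝ)
    (hS_adapted : ∀ t, 1 ≤ t → t ≤ T → Measurable[G t] (S t))
    (hS_bdd : ∃ C : ℝ, ∀ t ω i, |S t ω i| ≤ C)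
    (hR_meas : ∀ t, Measurable (R t))
    (hR_bdd : ∃ C : ℝ, ∀ t ω i, |R t ω i| ≤ C)
    (V1 b m : Fin N → ℝ) (α : ℝ)
    (D : ℕ → Ω → Fin N → ℝ)
    (hD_adm : Admissible T G D)
    (hD_feas : FeasibleDrain P T R V1 b m D)
    (gam v lam w : ℕ → Ω → Fin N → ℝ)
    (hy : IsDualVariable P T gam v lam w)
    (hy_feas : DualFeasible P T G S α gam v lam w) :
    revenue P T S R V1 α D ≤ dualValue P T S R V1 b m α v lam w := by
  classical
  obtain ⟨K, rfl⟩ : ∃ K, T = K + 1 := ⟨T - 1, by omega⟩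
  have hK : 1 ≤ K := by omega
  have hIco : Finset.Ico 1 (K + 1) = Finset.Icc 1 K := Finset.Ico_add_one_right_eq_Icc 1 K
  simp only [Admissible, Nat.add_sub_cancel] at hD_adm
  simp only [FeasibleDrain, Nat.add_sub_cancel] at hD_feas
  simp only [IsDualVariable, Nat.add_sub_cancel] at hy
  obtain ⟨hy_int, hy_pos⟩ := hy
  simp only [DualFeasible, Nat.add_sub_cancel] at hy_feas
  obtain ⟨CS, hCS⟩ := hS_bdd
  obtain ⟨CR, hCR⟩ := hR_bdd
  have hSmi : ∀ t, 1 ≤ t → t ≤ K + 1 → ∀ i, Measurable fun ω => S t ω i :=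
    fun t h1 h2 i => (measurable_pi_apply i).comp ((hS_adapted t h1 h2).mono (hG_le t) le_rfl)
  have intS : ∀ t, 1 ≤ t → t ≤ K + 1 → ∀ i, Integrable (fun ω => S t ω i) P :=
    fun t h1 h2 i => wd_int_of_bdd (hSmi t h1 h2 i).aestronglyMeasurable (fun ω => hCS t ω i)
  have hRmi : ∀ t i, Measurable fun ω => R t ω i :=
    fun t i => (measurable_pi_apply i).comp (hR_meas t)
  have hDmi : ∀ t, 1 ≤ t → t ≤ K → ∀ i, Measurable fun ω => D t ω i :=
    fun t h1 h2 i => (measurable_pi_apply i).comp ((hD_adm t h1 h2).1.mono (hG_le t) le_rfl)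
  choose! CD hCD using fun t (h1 : 1 ≤ t) (h2 : t ≤ K) => (hD_adm t h1 h2).2
  have int_lam_sum : ∀ t, 1 ≤ t → ∀ i,
      Integrable (fun ω => ∑ s ∈ Finset.Icc t K, lam s ω i) P := by
    intro t h1 i
    refine integrable_finset_sum _ fun s hs => ?_
    obtain ⟨hs1, hs2⟩ := Finset.mem_Icc.mp hs
    exact (hy_int s (by omega) hs2 i).2.2.1
  have int_w_sum : ∀ t i,
      Integrable (fun ω => ∑ s ∈ Finset.Icc (t + 1) K, w s ω i) P := by
    intro t i
    refine integrable_finset_sum _ fun s hs => ?_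
    obtain ⟨hs1, hs2⟩ := Finset.mem_Icc.mp hs
    exact (hy_int s (by omega) hs2 i).2.2.2
  have intphi : ∀ t, 1 ≤ t → t ≤ K → ∀ i, Integrable (fun ω =>
      S (t + 1) ω i - α * S (K + 1) ω i + gam t ω i - v t ω i
        - ∑ s ∈ Finset.Icc t K, lam s ω i + ∑ s ∈ Finset.Icc (t + 1) K, w s ω i) P := by
    intro t h1 h2 i
    exact (((((intS (t + 1) (by omega) (by omega) i).sub
      ((intS (K + 1) (by omega) le_rfl i).const_mul α)).add
      (hy_int t h1 h2 i).1).sub (hy_int t h1 h2 i).2.1).sub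
      (int_lam_sum t h1 i)).add (int_w_sum t i)
  have intpsi : ∀ t, 1 ≤ t → t ≤ K → ∀ i, Integrable (fun ω =>
      v t ω i - gam t ω i + ∑ s ∈ Finset.Icc t K, lam s ω i
        - ∑ s ∈ Finset.Icc (t + 1) K, w s ω i) P := by
    intro t h1 h2 i
    exact (((hy_int t h1 h2 i).2.1.sub (hy_int t h1 h2 i).1).add
      (int_lam_sum t h1 i)).sub (int_w_sum t i)
  have intDphi : ∀ t, 1 ≤ t → t ≤ K → ∀ i, Integrable (fun ω => D t ω i *
      (S (t + 1) ω i - α * S (K + 1) ω i + gam t ω i - v t ω i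
        - ∑ s ∈ Finset.Icc t K, lam s ω i + ∑ s ∈ Finset.Icc (t + 1) K, w s ω i)) P :=
    fun t h1 h2 i => (intphi t h1 h2 i).bdd_mul (hDmi t h1 h2 i).aestronglyMeasurable
      (c := CD t) (Filter.Eventually.of_forall fun ω => by simpa [Real.norm_eq_abs] using hCD t h1 h2 ω i)
  have intDpsi : ∀ t, 1 ≤ t → t ≤ K → ∀ i, Integrable (fun ω => D t ω i *
      (v t ω i - gam t ω i + ∑ s ∈ Finset.Icc t K, lam s ω i
        - ∑ s ∈ Finset.Icc (t + 1) K, w s ω i)) P :=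
    fun t h1 h2 i => (intpsi t h1 h2 i).bdd_mul (hDmi t h1 h2 i).aestronglyMeasurable
      (c := CD t) (Filter.Eventually.of_forall fun ω => by simpa [Real.norm_eq_abs] using hCD t h1 h2 ω i)
  have intSR : ∀ t i, Integrable (fun ω => S (K + 1) ω i * R t ω i) P := fun t i =>
    wd_int_of_bdd ((hSmi (K + 1) (by omega) le_rfl i).mul (hRmi t i)).aestronglyMeasurable
      (C := CS * CR) fun ω => by
        rw [abs_mul]
        exact mul_le_mul (hCS _ _ _) (hCR _ _ _) (abs_nonneg _)
          ((abs_nonneg _).trans (hCS (K + 1) ω i))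
  have intg0 : Integrable (fun ω => ∑ i, S (K + 1) ω i * V1 i
      + ∑ t ∈ Finset.Icc 1 K, ∑ i, S (K + 1) ω i * R t ω i) P :=
    (integrable_finset_sum _ fun i _ =>
        (intS (K + 1) (by omega) le_rfl i).mul_const (V1 i)).add
      (integrable_finset_sum _ fun t _ => integrable_finset_sum _ fun i _ => intSR t i)
  have hRsum_bd : ∀ (t : ℕ) i ω,
      |∑ s ∈ Finset.Ico 1 t, R s ω i| ≤ ∑ s ∈ Finset.Ico 1 t, CR :=
    fun t i ω => (Finset.abs_sum_le_sum_abs _ _).trans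
      (Finset.sum_le_sum fun s _ => hCR s ω i)
  have int_dual : ∀ t, 1 ≤ t → t ≤ K → Integrable (fun ω =>
      ∑ i, lam t ω i * (V1 i + ∑ s ∈ Finset.Ico 1 t, R s ω i) + ∑ i, v t ω i * b i
        + ∑ i, w t ω i * (m i - V1 i - ∑ s ∈ Finset.Ico 1 t, R s ω i)) P := by
    intro t h1 h2
    have hlam : Integrable
        (fun ω => ∑ i, lam t ω i * (V1 i + ∑ s ∈ Finset.Ico 1 t, R s ω i)) P := by
      refine integrable_finset_sum _ fun i _ => ?_
      refine wd_int_mul_bdd (hy_int t h1 h2 i).2.2.1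
        (measurable_const.add
          (Finset.measurable_sum _ fun s _ => hRmi s i)).aestronglyMeasurable
        (C := |V1 i| + ∑ s ∈ Finset.Ico 1 t, CR) fun ω => ?_
      exact (abs_add_le _ _).trans (add_le_add le_rfl (hRsum_bd t i ω))
    have hvint : Integrable (fun ω => ∑ i, v t ω i * b i) P :=
      integrable_finset_sum _ fun i _ => (hy_int t h1 h2 i).2.1.mul_const (b i)
    have hwint : Integrable (fun ω =>
        ∑ i, w t ω i * (m i - V1 i - ∑ s ∈ Finset.Ico 1 t, R s ω i)) P := by
      refine integrable_finset_sum _ fun i _ => ?_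
      refine wd_int_mul_bdd (hy_int t h1 h2 i).2.2.2
        (measurable_const.sub
          (Finset.measurable_sum _ fun s _ => hRmi s i)).aestronglyMeasurable
        (C := |m i - V1 i| + ∑ s ∈ Finset.Ico 1 t, CR) fun ω => ?_
      calc |m i - V1 i - ∑ s ∈ Finset.Ico 1 t, R s ω i|
          ≤ |m i - V1 i| + |∑ s ∈ Finset.Ico 1 t, R s ω i| := by
            rw [sub_eq_add_neg]
            exact (abs_add_le _ _).trans (le_of_eq (by rw [abs_neg]))
        _ ≤ _ := add_le_add le_rfl (hRsum_bd t i ω)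
    exact (hlam.add hvint).add hwint
  have hXint : Integrable (fun ω => ∑ t ∈ Finset.Icc 1 K, ∑ i, D t ω i *
      (S (t + 1) ω i - α * S (K + 1) ω i + gam t ω i - v t ω i
        - ∑ s ∈ Finset.Icc t K, lam s ω i + ∑ s ∈ Finset.Icc (t + 1) K, w s ω i)) P :=
    integrable_finset_sum _ fun t ht => integrable_finset_sum _ fun i _ => by
      obtain ⟨h1, h2⟩ := Finset.mem_Icc.mp ht
      exact intDphi t h1 h2 i
  have hXzero : ∫ ω, (∑ t ∈ Finset.Icc 1 K, ∑ i, D t ω i *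
      (S (t + 1) ω i - α * S (K + 1) ω i + gam t ω i - v t ω i
        - ∑ s ∈ Finset.Icc t K, lam s ω i
        + ∑ s ∈ Finset.Icc (t + 1) K, w s ω i)) ∂P = 0 := by
    rw [integral_finset_sum _ (fun t ht => integrable_finset_sum _ fun i _ => by
      obtain ⟨h1, h2⟩ := Finset.mem_Icc.mp ht; exact intDphi t h1 h2 i)]
    refine Finset.sum_eq_zero fun t ht => ?_
    obtain ⟨h1, h2⟩ := Finset.mem_Icc.mp ht
    rw [integral_finset_sum _ (fun i _ => intDphi t h1 h2 i)]
    refine Finset.sum_eq_zero fun i _ => ?_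
    exact wd_orth (hG_le t) (intphi t h1 h2 i)
      ((measurable_pi_apply i).comp (hD_adm t h1 h2).1).stronglyMeasurable
      (fun ω => hCD t h1 h2 ω i) (fun A hA => hy_feas t h1 h2 A hA i)
  have hGint : Integrable (fun ω =>
      (∑ t ∈ Finset.Icc 1 K, ∑ i, D t ω i * (v t ω i - gam t ω i
        + ∑ s ∈ Finset.Icc t K, lam s ω i - ∑ s ∈ Finset.Icc (t + 1) K, w s ω i))
      + α * (∑ i, S (K + 1) ω i * V1 i
        + ∑ t ∈ Finset.Icc 1 K, ∑ i, S (K + 1) ω i * R t ω i)) P :=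
    (integrable_finset_sum _ fun t ht => integrable_finset_sum _ fun i _ => by
      obtain ⟨h1, h2⟩ := Finset.mem_Icc.mp ht; exact intDpsi t h1 h2 i).add
      (intg0.const_mul α)
  have hFdualint : Integrable (fun ω =>
      α * (∑ i, S (K + 1) ω i * V1 i
        + ∑ t ∈ Finset.Icc 1 K, ∑ i, S (K + 1) ω i * R t ω i)
      + ∑ t ∈ Finset.Icc 1 K, (∑ i, lam t ω i * (V1 i + ∑ s ∈ Finset.Ico 1 t, R s ω i)
        + ∑ i, v t ω i * b i
        + ∑ i, w t ω i * (m i - V1 i - ∑ s ∈ Finset.Ico 1 t, R s ω i))) P :=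
    (intg0.const_mul α).add (integrable_finset_sum _ fun t ht => by
      obtain ⟨h1, h2⟩ := Finset.mem_Icc.mp ht; exact int_dual t h1 h2)
  have hMineq : ∀ᵐ ω ∂P,
      (∑ t ∈ Finset.Icc 1 K, ∑ i, D t ω i * (v t ω i - gam t ω i
        + ∑ s ∈ Finset.Icc t K, lam s ω i - ∑ s ∈ Finset.Icc (t + 1) K, w s ω i))
        + α * (∑ i, S (K + 1) ω i * V1 i
          + ∑ t ∈ Finset.Icc 1 K, ∑ i, S (K + 1) ω i * R t ω i)
      ≤ α * (∑ i, S (K + 1) ω i * V1 i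
          + ∑ t ∈ Finset.Icc 1 K, ∑ i, S (K + 1) ω i * R t ω i)
        + ∑ t ∈ Finset.Icc 1 K, (∑ i, lam t ω i * (V1 i + ∑ s ∈ Finset.Ico 1 t, R s ω i)
          + ∑ i, v t ω i * b i
          + ∑ i, w t ω i * (m i - V1 i - ∑ s ∈ Finset.Ico 1 t, R s ω i)) := by
    filter_upwards [hD_feas, hy_pos] with ω hfe hpo
    have hM := wd_pointwise (K := K) (fun t i => D t ω i) (fun t i => gam t ω i) (fun t i => v t ω i)
      (fun t i => lam t ω i) (fun t i => w t ω i) (fun t i => R t ω i) V1 b m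
      (fun t h1 h2 i => by simpa [waterLevel] using hfe t h1 h2 i)
      (fun t h1 h2 i => hpo t h1 h2 i)
    linarith
  have hpoint : ∀ ω, (∑ t ∈ Finset.Icc 1 K, ∑ i, D t ω i * S (t + 1) ω i)
      + α * ∑ i, S (K + 1) ω i * (V1 i + ∑ s ∈ Finset.Icc 1 K, (R s ω i - D s ω i))
      = (∑ t ∈ Finset.Icc 1 K, ∑ i, D t ω i *
          (S (t + 1) ω i - α * S (K + 1) ω i + gam t ω i - v t ω i
            - ∑ s ∈ Finset.Icc t K, lam s ω i + ∑ s ∈ Finset.Icc (t + 1) K, w s ω i))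
        + ((∑ t ∈ Finset.Icc 1 K, ∑ i, D t ω i * (v t ω i - gam t ω i
            + ∑ s ∈ Finset.Icc t K, lam s ω i - ∑ s ∈ Finset.Icc (t + 1) K, w s ω i))
          + α * (∑ i, S (K + 1) ω i * V1 i
            + ∑ t ∈ Finset.Icc 1 K, ∑ i, S (K + 1) ω i * R t ω i)) := by
    intro ω
    have hd := wd_rev_decomp (K := K) (fun t i => D t ω i) (fun t i => R t ω i)
      (fun t i => S t ω i) V1 α
    have hmerge : (∑ t ∈ Finset.Icc 1 K, ∑ i, D t ω i *
          (S (t + 1) ω i - α * S (K + 1) ω i + gam t ω i - v t ω i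
            - ∑ s ∈ Finset.Icc t K, lam s ω i + ∑ s ∈ Finset.Icc (t + 1) K, w s ω i))
        + (∑ t ∈ Finset.Icc 1 K, ∑ i, D t ω i * (v t ω i - gam t ω i
            + ∑ s ∈ Finset.Icc t K, lam s ω i - ∑ s ∈ Finset.Icc (t + 1) K, w s ω i))
        = ∑ t ∈ Finset.Icc 1 K, ∑ i, D t ω i *
            (S (t + 1) ω i - α * S (K + 1) ω i) := by
      rw [← Finset.sum_add_distrib]
      refine Finset.sum_congr rfl fun t _ => ?_
      rw [← Finset.sum_add_distrib]
      refine Finset.sum_congr rfl fun i _ => ?_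
      ring
    rw [hd, ← hmerge]
    ring
  have hrev_eq : revenue P (K + 1) S R V1 α D
      = ∫ ω, ((∑ t ∈ Finset.Icc 1 K, ∑ i, D t ω i * S (t + 1) ω i)
        + α * ∑ i, S (K + 1) ω i *
          (V1 i + ∑ s ∈ Finset.Icc 1 K, (R s ω i - D s ω i))) ∂P := by
    simp only [revenue, waterLevel, hIco]
  have hdual_eq : dualValue P (K + 1) S R V1 b m α v lam w
      = α * ∫ ω, (∑ i, S (K + 1) ω i * V1 i
          + ∑ t ∈ Finset.Icc 1 K, ∑ i, S (K + 1) ω i * R t ω i) ∂P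
        + ∑ t ∈ Finset.Icc 1 K, ∫ ω,
            (∑ i, lam t ω i * (V1 i + ∑ s ∈ Finset.Ico 1 t, R s ω i)
              + ∑ i, v t ω i * b i
              + ∑ i, w t ω i * (m i - V1 i - ∑ s ∈ Finset.Ico 1 t, R s ω i)) ∂P := by
    simp only [dualValue, hIco]
  rw [hrev_eq, hdual_eq]
  calc ∫ ω, ((∑ t ∈ Finset.Icc 1 K, ∑ i, D t ω i * S (t + 1) ω i)
        + α * ∑ i, S (K + 1) ω i *
          (V1 i + ∑ s ∈ Finset.Icc 1 K, (R s ω i - D s ω i))) ∂P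
      = ∫ ω, ((∑ t ∈ Finset.Icc 1 K, ∑ i, D t ω i *
          (S (t + 1) ω i - α * S (K + 1) ω i + gam t ω i - v t ω i
            - ∑ s ∈ Finset.Icc t K, lam s ω i + ∑ s ∈ Finset.Icc (t + 1) K, w s ω i))
        + ((∑ t ∈ Finset.Icc 1 K, ∑ i, D t ω i * (v t ω i - gam t ω i
            + ∑ s ∈ Finset.Icc t K, lam s ω i - ∑ s ∈ Finset.Icc (t + 1) K, w s ω i))
          + α * (∑ i, S (K + 1) ω i * V1 i
            + ∑ t ∈ Finset.Icc 1 K, ∑ i, S (K + 1) ω i * R t ω i))) ∂P :=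
        integral_congr_ae (Filter.Eventually.of_forall hpoint)
    _ = (∫ ω, (∑ t ∈ Finset.Icc 1 K, ∑ i, D t ω i *
          (S (t + 1) ω i - α * S (K + 1) ω i + gam t ω i - v t ω i
            - ∑ s ∈ Finset.Icc t K, lam s ω i
            + ∑ s ∈ Finset.Icc (t + 1) K, w s ω i)) ∂P)
        + ∫ ω, ((∑ t ∈ Finset.Icc 1 K, ∑ i, D t ω i * (v t ω i - gam t ω i
            + ∑ s ∈ Finset.Icc t K, lam s ω i - ∑ s ∈ Finset.Icc (t + 1) K, w s ω i))
          + α * (∑ i, S (K + 1) ω i * V1 i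
            + ∑ t ∈ Finset.Icc 1 K, ∑ i, S (K + 1) ω i * R t ω i)) ∂P :=
        integral_add hXint hGint
    _ = ∫ ω, ((∑ t ∈ Finset.Icc 1 K, ∑ i, D t ω i * (v t ω i - gam t ω i
            + ∑ s ∈ Finset.Icc t K, lam s ω i - ∑ s ∈ Finset.Icc (t + 1) K, w s ω i))
          + α * (∑ i, S (K + 1) ω i * V1 i
            + ∑ t ∈ Finset.Icc 1 K, ∑ i, S (K + 1) ω i * R t ω i)) ∂P := by
        rw [hXzero, zero_add]
    _ ≤ ∫ ω, (α * (∑ i, S (K + 1) ω i * V1 i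
          + ∑ t ∈ Finset.Icc 1 K, ∑ i, S (K + 1) ω i * R t ω i)
        + ∑ t ∈ Finset.Icc 1 K, (∑ i, lam t ω i * (V1 i + ∑ s ∈ Finset.Ico 1 t, R s ω i)
          + ∑ i, v t ω i * b i
          + ∑ i, w t ω i * (m i - V1 i - ∑ s ∈ Finset.Ico 1 t, R s ω i))) ∂P :=
        integral_mono_ae hGint hFdualint hMineq
    _ = α * ∫ ω, (∑ i, S (K + 1) ω i * V1 i
          + ∑ t ∈ Finset.Icc 1 K, ∑ i, S (K + 1) ω i * R t ω i) ∂P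
        + ∑ t ∈ Finset.Icc 1 K, ∫ ω,
            (∑ i, lam t ω i * (V1 i + ∑ s ∈ Finset.Ico 1 t, R s ω i)
              + ∑ i, v t ω i * b i
              + ∑ i, w t ω i * (m i - V1 i - ∑ s ∈ Finset.Ico 1 t, R s ω i)) ∂P := by
        rw [integral_add (intg0.const_mul α) (integrable_finset_sum _ fun t ht => by
            obtain ⟨h1, h2⟩ := Finset.mem_Icc.mp ht; exact int_dual t h1 h2),
          integral_const_mul,
          integral_finset_sum _ (fun t ht => by
            obtain ⟨h1, h2⟩ := Finset.mem_Icc.mp ht; exact int_dual t h1 h2)]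
end
end

section
/- Suppose α = 1 and each coordinate process (S_i(t))_{t=1}^{T}, i = 1,…,N, is a martingale with respect to the filtration (G_t) and P. Then every admissible drain process D (feasible or not) has the same expected revenue: J(D) = E[S(T)·V(1) + Σ_{t=1}^{T−1} S(T)·R(t)]. In particular, in the martingale case the expected revenue does not depend on the drain strategy. -/
open MeasureTheory Finset

noncomputable section

/-- **Martingale case: the expected revenue does not depend on the drain strategy.**
If `α = 1` and each coordinate of the price process is a martingale w.r.t. the
manager's filtration `(G_t)`, then every admissible drain process `D` has the same
expected revenue `J(D) = E[S(T)·V(1) + ∑_{t=1}^{T-1} S(T)·R(t)]`. -/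
theorem revenue_eq_of_martingale {Ω : Type*} {mΩ : MeasurableSpace Ω}
    (P : Measure Ω) [IsProbabilityMeasure P]
    (T N : ℕ) (hT : 2 ≤ T) (hN : 1 ≤ N)
    (G : ℕ → MeasurableSpace Ω)
    (hG_mono : ∀ s t, s ≤ t → G s ≤ G t) (hG_le : ∀ t, G t ≤ mΩ)
    (S R : ℕ → Ω → Fin N → ℝ)
    (hS_adapted : ∀ t, 1 ≤ t → t ≤ T → Measurable[G t] (S t))
    (hS_bdd : ∃ C : ℝ, ∀ t ω i, |S t ω i| ≤ C)
    (hR_meas : ∀ t, Measurable (R t))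
    (hR_bdd : ∃ C : ℝ, ∀ t ω i, |R t ω i| ≤ C)
    (V1 : Fin N → ℝ) (α : ℝ) (hα : α = 1)
    (hmart : ∀ s t, 1 ≤ s → s ≤ t → t ≤ T → ∀ i,
      P[(fun ω => S t ω i)|G s] =ᵐ[P] fun ω => S s ω i)
    (D : ℕ → Ω → Fin N → ℝ) (hD_adm : Admissible T G D) :
    revenue P T S R V1 α D
      = ∫ ω, (∑ i, S T ω i * V1 i
          + ∑ t ∈ Finset.Ico 1 T, ∑ i, S T ω i * R t ω i) ∂P := by
  subst hα
  obtain ⟨CS, hCS⟩ := hS_bdd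
  obtain ⟨CR, hCR⟩ := hR_bdd
  -- measurability helpers
  have hSTmeas : Measurable (S T) := (hS_adapted T (by omega) le_rfl).mono (hG_le T) le_rfl
  have hSTi : ∀ i, Measurable fun ω => S T ω i := fun i => (measurable_pi_apply i).comp hSTmeas
  have hInt : ∀ (f : Ω → ℝ), Measurable f → ∀ C : ℝ, (∀ ω, |f ω| ≤ C) → Integrable f P := by
    intro f hf C hC
    exact (integrable_const C).mono' hf.aestronglyMeasurable
      (Filter.Eventually.of_forall fun ω => by simpa [Real.norm_eq_abs] using hC ω)
  -- the key exchange: ∫ D t · S (t+1) = ∫ S T · D t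
  have key : ∀ t ∈ Finset.Ico 1 T, ∀ i : Fin N,
      ∫ ω, D t ω i * S (t + 1) ω i ∂P = ∫ ω, S T ω i * D t ω i ∂P := by
    intro t ht i
    simp only [Finset.mem_Ico] at ht
    obtain ⟨hDmeas, C, hDC⟩ := hD_adm t ht.1 (by omega)
    set f : Ω → ℝ := fun ω => D t ω i with hf_def
    set g : Ω → ℝ := fun ω => S T ω i with hg_def
    have hfGt : Measurable[G t] f := (measurable_pi_apply i).comp hDmeas
    have hfGt1 : Measurable[G (t + 1)] f := hfGt.mono (hG_mono t (t + 1) (by omega)) le_rfl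
    have hfmeas : Measurable f := hfGt.mono (hG_le t) le_rfl
    have hg_int : Integrable g P := hInt g (hSTi i) CS fun ω => hCS T ω i
    have hfg_int : Integrable (f * g) P := by
      refine hInt _ (hfmeas.mul (hSTi i)) (C * CS) fun ω => ?_
      calc |f ω * g ω| = |f ω| * |g ω| := abs_mul _ _
        _ ≤ C * CS := mul_le_mul (hDC ω i) (hCS T ω i) (abs_nonneg _)
            (le_trans (abs_nonneg _) (hDC ω i))
    have hmul : P[f * g|G (t + 1)] =ᵐ[P] f * P[g|G (t + 1)] :=
      condExp_mul_of_stronglyMeasurable_left hfGt1.stronglyMeasurable hfg_int hg_int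
    have hm : P[g|G (t + 1)] =ᵐ[P] fun ω => S (t + 1) ω i :=
      hmart (t + 1) T (by omega) (by omega) le_rfl i
    have h1 : ∫ ω, f ω * S (t + 1) ω i ∂P = ∫ ω, f ω * (P[g|G (t + 1)]) ω ∂P :=
      integral_congr_ae (hm.mono fun ω hω => by simp only [hω])
    have h2 : ∫ ω, f ω * (P[g|G (t + 1)]) ω ∂P = ∫ ω, (P[f * g|G (t + 1)]) ω ∂P :=
      (integral_congr_ae (hmul.mono fun ω hω => by simp [hω])).symm
    have h3 : ∫ ω, (P[f * g|G (t + 1)]) ω ∂P = ∫ ω, f ω * g ω ∂P := by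
      haveI : SigmaFinite (P.trim (hG_le (t + 1))) := inferInstance
      simpa using integral_condExp (hG_le (t + 1)) (f := f * g)
    calc ∫ ω, D t ω i * S (t + 1) ω i ∂P = ∫ ω, f ω * g ω ∂P := by
          rw [← h3, ← h2, ← h1]
      _ = ∫ ω, S T ω i * D t ω i ∂P := by
          simp only [hf_def, hg_def, mul_comm]
  -- pointwise decomposition of the integrand
  have hpt : ∀ ω, (∑ t ∈ Finset.Ico 1 T, ∑ i, D t ω i * S (t + 1) ω i
        + 1 * ∑ i, S T ω i * waterLevel V1 R D T ω i)
      = (∑ i, S T ω i * V1 i + ∑ t ∈ Finset.Ico 1 T, ∑ i, S T ω i * R t ω i)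
        + ∑ t ∈ Finset.Ico 1 T, ∑ i, (D t ω i * S (t + 1) ω i - S T ω i * D t ω i) := by
    intro ω
    simp only [waterLevel, one_mul, mul_add, Finset.mul_sum, mul_sub,
      Finset.sum_add_distrib, Finset.sum_sub_distrib]
    have e1 : ∑ x : Fin N, ∑ s ∈ Finset.Ico 1 T, S T ω x * R s ω x
        = ∑ s ∈ Finset.Ico 1 T, ∑ x : Fin N, S T ω x * R s ω x := Finset.sum_comm
    have e2 : ∑ x : Fin N, ∑ s ∈ Finset.Ico 1 T, S T ω x * D s ω x
        = ∑ s ∈ Finset.Ico 1 T, ∑ x : Fin N, S T ω x * D s ω x := Finset.sum_comm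
    rw [e1, e2]
    ring
  -- integrability pieces
  have hDmb : ∀ t ∈ Finset.Ico 1 T, Measurable (D t) ∧ ∃ C : ℝ, ∀ ω i, |D t ω i| ≤ C := by
    intro t ht
    simp only [Finset.mem_Ico] at ht
    obtain ⟨hDmeas, C, hDC⟩ := hD_adm t ht.1 (by omega)
    exact ⟨hDmeas.mono (hG_le t) le_rfl, C, hDC⟩
  have hSmeas : ∀ t, 1 ≤ t → t ≤ T → Measurable (S t) := fun t h1 h2 =>
    (hS_adapted t h1 h2).mono (hG_le t) le_rfl
  have hintB : Integrable (fun ω => ∑ i, S T ω i * V1 i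
      + ∑ t ∈ Finset.Ico 1 T, ∑ i, S T ω i * R t ω i) P := by
    refine Integrable.add ?_ ?_
    · refine integrable_finset_sum _ fun i _ => ?_
      exact hInt _ ((hSTi i).mul_const _) (CS * |V1 i|) fun ω => by
        rw [abs_mul]
        exact mul_le_mul_of_nonneg_right (hCS T ω i) (abs_nonneg _)
    · refine integrable_finset_sum _ fun t ht => ?_
      refine integrable_finset_sum _ fun i _ => ?_
      refine hInt _ ((hSTi i).mul ((measurable_pi_apply i).comp (hR_meas t))) (CS * CR)
        fun ω => ?_
      rw [abs_mul]
      exact mul_le_mul (hCS T ω i) (hCR t ω i) (abs_nonneg _)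
        (le_trans (abs_nonneg _) (hCS T ω i))
  have hintA : ∀ t ∈ Finset.Ico 1 T, ∀ i : Fin N,
      Integrable (fun ω => D t ω i * S (t + 1) ω i) P := by
    intro t ht i
    have htm := Finset.mem_Ico.mp ht
    obtain ⟨hDmeas, C, hDC⟩ := hDmb t ht
    have hDi : Measurable fun ω => D t ω i := (measurable_pi_apply i).comp hDmeas
    have hSi : Measurable fun ω => S (t + 1) ω i :=
      (measurable_pi_apply i).comp (hSmeas (t + 1) (by omega) (by omega))
    refine hInt _ (hDi.mul hSi) (C * CS) fun ω => ?_
    rw [abs_mul]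
    exact mul_le_mul (hDC ω i) (hCS (t + 1) ω i) (abs_nonneg _)
      (le_trans (abs_nonneg _) (hDC ω i))
  have hintB' : ∀ t ∈ Finset.Ico 1 T, ∀ i : Fin N,
      Integrable (fun ω => S T ω i * D t ω i) P := by
    intro t ht i
    obtain ⟨hDmeas, C, hDC⟩ := hDmb t ht
    have hDi : Measurable fun ω => D t ω i := (measurable_pi_apply i).comp hDmeas
    refine hInt _ ((hSTi i).mul hDi) (CS * C) fun ω => ?_
    rw [abs_mul]
    exact mul_le_mul (hCS T ω i) (hDC ω i) (abs_nonneg _)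
      (le_trans (abs_nonneg _) (hCS T ω i))
  have hintΔt : ∀ t ∈ Finset.Ico 1 T, ∀ i : Fin N,
      Integrable (fun ω => D t ω i * S (t + 1) ω i - S T ω i * D t ω i) P :=
    fun t ht i => (hintA t ht i).sub (hintB' t ht i)
  have hintΔ : Integrable (fun ω => ∑ t ∈ Finset.Ico 1 T, ∑ i,
      (D t ω i * S (t + 1) ω i - S T ω i * D t ω i)) P := by
    refine integrable_finset_sum _ fun t ht => integrable_finset_sum _ fun i _ => hintΔt t ht i
  rw [revenue]
  calc ∫ ω, (∑ t ∈ Finset.Ico 1 T, ∑ i, D t ω i * S (t + 1) ω i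
        + 1 * ∑ i, S T ω i * waterLevel V1 R D T ω i) ∂P
      = ∫ ω, ((∑ i, S T ω i * V1 i + ∑ t ∈ Finset.Ico 1 T, ∑ i, S T ω i * R t ω i)
        + ∑ t ∈ Finset.Ico 1 T, ∑ i, (D t ω i * S (t + 1) ω i - S T ω i * D t ω i)) ∂P := by
        exact integral_congr_ae (Filter.Eventually.of_forall fun ω => hpt ω)
    _ = (∫ ω, (∑ i, S T ω i * V1 i + ∑ t ∈ Finset.Ico 1 T, ∑ i, S T ω i * R t ω i) ∂P)
        + ∫ ω, ∑ t ∈ Finset.Ico 1 T, ∑ i,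
            (D t ω i * S (t + 1) ω i - S T ω i * D t ω i) ∂P :=
        integral_add hintB hintΔ
    _ = ∫ ω, (∑ i, S T ω i * V1 i + ∑ t ∈ Finset.Ico 1 T, ∑ i, S T ω i * R t ω i) ∂P := by
        rw [add_eq_left]
        rw [integral_finset_sum _ fun t ht => integrable_finset_sum _ fun i _ => hintΔt t ht i]
        refine Finset.sum_eq_zero fun t ht => ?_
        rw [integral_finset_sum _ fun i _ => hintΔt t ht i]
        refine Finset.sum_eq_zero fun i _ => ?_
        rw [integral_sub (hintA t ht i) (hintB' t ht i), key t ht i, sub_self]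
end
end

section
/- Suppose α = 1 and each coordinate process (S_i(t))_{t=1}^{T}, i = 1,…,N, is a submartingale with respect to the filtration (G_t) and P. Then for every admissible drain process D with D(t) ≥ 0 componentwise almost surely for all t = 1,…,T−1, the expected revenue is bounded above by the value of the water in the system: J(D) ≤ E[S(T)·V(1) + Σ_{t=1}^{T−1} S(T)·R(t)]. -/
open MeasureTheory Finset

noncomputable section

/-- **Submartingale case: upper bound on the expected revenue.**
If `α = 1` and each coordinate of the price process is a submartingale w.r.t. the
manager's filtration `(G_t)`, then every admissible nonnegative drain process `D`
satisfies `J(D) ≤ E[S(T)·V(1) + ∑_{t=1}^{T-1} S(T)·R(t)]`. -/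
theorem revenue_le_of_submartingale {Ω : Type*} {mΩ : MeasurableSpace Ω}
    (P : Measure Ω) [IsProbabilityMeasure P]
    (T N : ℕ) (hT : 2 ≤ T) (hN : 1 ≤ N)
    (G : ℕ → MeasurableSpace Ω)
    (hG_mono : ∀ s t, s ≤ t → G s ≤ G t) (hG_le : ∀ t, G t ≤ mΩ)
    (S R : ℕ → Ω → Fin N → ℝ)
    (hS_adapted : ∀ t, 1 ≤ t → t ≤ T → Measurable[G t] (S t))
    (hS_bdd : ∃ C : ℝ, ∀ t ω i, |S t ω i| ≤ C)
    (hR_meas : ∀ t, Measurable (R t))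
    (hR_bdd : ∃ C : ℝ, ∀ t ω i, |R t ω i| ≤ C)
    (V1 : Fin N → ℝ) (α : ℝ) (hα : α = 1)
    (hsubmart : ∀ s t, 1 ≤ s → s ≤ t → t ≤ T → ∀ i,
      (fun ω => S s ω i) ≤ᵐ[P] P[(fun ω => S t ω i)|G s])
    (D : ℕ → Ω → Fin N → ℝ) (hD_adm : Admissible T G D)
    (hD_nonneg : ∀ᵐ ω ∂P, ∀ t, 1 ≤ t → t ≤ T - 1 → ∀ i, 0 ≤ D t ω i) :
    revenue P T S R V1 α D
      ≤ ∫ ω, (∑ i, S T ω i * V1 i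
          + ∑ t ∈ Finset.Ico 1 T, ∑ i, S T ω i * R t ω i) ∂P := by
  classical
  subst hα
  obtain ⟨CS, hCS⟩ := hS_bdd
  obtain ⟨CR, hCR⟩ := hR_bdd
  -- integrability of bounded products
  have hintmul : ∀ (f g : Ω → ℝ) (Cf Cg : ℝ), AEStronglyMeasurable f P →
      AEStronglyMeasurable g P → (∀ ω, |f ω| ≤ Cf) → (∀ ω, |g ω| ≤ Cg) →
      Integrable (fun ω => f ω * g ω) P := by
    intro f g Cf Cg hf hg hCf hCg
    refine ⟨hf.mul hg, HasFiniteIntegral.of_bounded (C := Cf * Cg) (ae_of_all _ fun ω => ?_)⟩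
    calc ‖f ω * g ω‖ = |f ω| * |g ω| := by rw [Real.norm_eq_abs, abs_mul]
      _ ≤ Cf * Cg :=
        mul_le_mul (hCf ω) (hCg ω) (abs_nonneg _) ((abs_nonneg _).trans (hCf ω))
  have hSmeas : ∀ t, 1 ≤ t → t ≤ T → ∀ i, AEStronglyMeasurable (fun ω => S t ω i) P :=
    fun t h1 h2 i =>
      (((measurable_pi_apply i).comp ((hS_adapted t h1 h2).mono (hG_le t) le_rfl))).aestronglyMeasurable
  have hDmeas : ∀ t, 1 ≤ t → t ≤ T - 1 → ∀ i, AEStronglyMeasurable (fun ω => D t ω i) P :=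
    fun t h1 h2 i =>
      (((measurable_pi_apply i).comp (((hD_adm t h1 h2).1).mono (hG_le t) le_rfl))).aestronglyMeasurable
  have hRmeas : ∀ t i, AEStronglyMeasurable (fun ω => R t ω i) P :=
    fun t i => ((measurable_pi_apply i).comp (hR_meas t)).aestronglyMeasurable
  -- integrability of all relevant products
  have hint_DS : ∀ t ∈ Finset.Ico 1 T, ∀ i : Fin N,
      Integrable (fun ω => D t ω i * S (t + 1) ω i) P := by
    intro t ht i
    simp only [Finset.mem_Ico] at ht
    obtain ⟨CD, hCD⟩ := (hD_adm t ht.1 (by omega)).2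
    exact hintmul _ _ CD CS (hDmeas t ht.1 (by omega) i)
      (hSmeas (t + 1) (by omega) (by omega) i) (fun ω => hCD ω i) (fun ω => hCS _ ω i)
  have hint_SD : ∀ t ∈ Finset.Ico 1 T, ∀ i : Fin N,
      Integrable (fun ω => S T ω i * D t ω i) P := by
    intro t ht i
    simp only [Finset.mem_Ico] at ht
    obtain ⟨CD, hCD⟩ := (hD_adm t ht.1 (by omega)).2
    exact hintmul _ _ CS CD (hSmeas T (by omega) le_rfl i)
      (hDmeas t ht.1 (by omega) i) (fun ω => hCS _ ω i) (fun ω => hCD ω i)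
  have hint_SV : ∀ i : Fin N, Integrable (fun ω => S T ω i * V1 i) P := by
    intro i
    exact hintmul _ _ CS |V1 i| (hSmeas T (by omega) le_rfl i)
      aestronglyMeasurable_const (fun ω => hCS _ ω i) (fun ω => le_rfl)
  have hint_SR : ∀ t ∈ Finset.Ico 1 T, ∀ i : Fin N,
      Integrable (fun ω => S T ω i * R t ω i) P := by
    intro t _ i
    exact hintmul _ _ CS CR (hSmeas T (by omega) le_rfl i) (hRmeas t i)
      (fun ω => hCS _ ω i) (fun ω => hCR _ ω i)
  -- the key submartingale inequality
  have hkey : ∀ t ∈ Finset.Ico 1 T, ∀ i : Fin N,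
      ∫ ω, D t ω i * S (t + 1) ω i ∂P ≤ ∫ ω, S T ω i * D t ω i ∂P := by
    intro t htmem i
    have ht := htmem
    simp only [Finset.mem_Ico] at ht
    have ht1 : 1 ≤ t := ht.1
    have ht2 : t ≤ T - 1 := by omega
    obtain ⟨hDm, CD, hCD⟩ := hD_adm t ht1 ht2
    have hm : G (t + 1) ≤ mΩ := hG_le (t + 1)
    haveI : SigmaFinite (P.trim hm) := by
      haveI : IsFiniteMeasure (P.trim hm) := isFiniteMeasure_trim hm
      infer_instance
    have hfSM : StronglyMeasurable[G (t + 1)] (fun ω => D t ω i) :=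
      ((measurable_pi_apply i).comp
        (hDm.mono (hG_mono t (t + 1) (Nat.le_succ t)) le_rfl)).stronglyMeasurable
    have hST : Integrable (fun ω => S T ω i) P :=
      ⟨hSmeas T (by omega) le_rfl i,
        HasFiniteIntegral.of_bounded (C := CS)
          (ae_of_all _ fun ω => by simpa [Real.norm_eq_abs] using hCS T ω i)⟩
    have hfh : Integrable ((fun ω => D t ω i) * fun ω => S T ω i) P :=
      hintmul _ _ CD CS (hDmeas t ht1 ht2 i) (hSmeas T (by omega) le_rfl i)
        (fun ω => hCD ω i) (fun ω => hCS _ ω i)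
    have hpull := condExp_mul_of_stronglyMeasurable_left hfSM hfh hST
    have hcondint : Integrable (fun ω => D t ω i * (P[fun ω => S T ω i|G (t + 1)]) ω) P :=
      integrable_condExp.bdd_mul (hDmeas t ht1 ht2 i)
        (ae_of_all _ fun ω => by simpa [Real.norm_eq_abs] using hCD ω i)
    have hstep1 : ∫ ω, D t ω i * S (t + 1) ω i ∂P
        ≤ ∫ ω, D t ω i * (P[fun ω => S T ω i|G (t + 1)]) ω ∂P := by
      refine integral_mono_ae (hint_DS t htmem i) hcondint ?_
      filter_upwards [hD_nonneg, hsubmart (t + 1) T (by omega) (by omega) le_rfl i]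
        with ω h1 h2
      exact mul_le_mul_of_nonneg_left h2 (h1 t ht1 ht2 i)
    have hstep2 : ∫ ω, D t ω i * (P[fun ω => S T ω i|G (t + 1)]) ω ∂P
        = ∫ ω, D t ω i * S T ω i ∂P := by
      have h1 : ∫ ω, D t ω i * (P[fun ω => S T ω i|G (t + 1)]) ω ∂P
          = ∫ ω, (P[(fun ω => D t ω i) * fun ω => S T ω i|G (t + 1)]) ω ∂P :=
        integral_congr_ae hpull.symm
      rw [h1, integral_condExp hm]
      rfl
    calc ∫ ω, D t ω i * S (t + 1) ω i ∂P
        ≤ ∫ ω, D t ω i * (P[fun ω => S T ω i|G (t + 1)]) ω ∂P := hstep1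
      _ = ∫ ω, D t ω i * S T ω i ∂P := hstep2
      _ = ∫ ω, S T ω i * D t ω i ∂P :=
        integral_congr_ae (Filter.Eventually.of_forall fun ω => mul_comm _ _)
  -- the correction term
  set F : Ω → ℝ := fun ω => ∑ t ∈ Finset.Ico 1 T, ∑ i,
    (S T ω i * D t ω i - D t ω i * S (t + 1) ω i) with hF
  have hF_term_int : ∀ t ∈ Finset.Ico 1 T, ∀ i : Fin N,
      Integrable (fun ω => S T ω i * D t ω i - D t ω i * S (t + 1) ω i) P :=
    fun t ht i => (hint_SD t ht i).sub (hint_DS t ht i)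
  have hF_int : Integrable F P :=
    integrable_finset_sum _ fun t ht =>
      integrable_finset_sum _ fun i _ => hF_term_int t ht i
  have hg_int : Integrable (fun ω => ∑ i, S T ω i * V1 i
      + ∑ t ∈ Finset.Ico 1 T, ∑ i, S T ω i * R t ω i) P :=
    (integrable_finset_sum _ fun i _ => hint_SV i).add
      (integrable_finset_sum _ fun t ht => integrable_finset_sum _ fun i _ => hint_SR t ht i)
  -- pointwise algebraic identity
  have hpt : ∀ ω, (∑ t ∈ Finset.Ico 1 T, ∑ i, D t ω i * S (t + 1) ω i
      + 1 * ∑ i, S T ω i * waterLevel V1 R D T ω i)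
      = (∑ i, S T ω i * V1 i + ∑ t ∈ Finset.Ico 1 T, ∑ i, S T ω i * R t ω i) - F ω := by
    intro ω
    have hw : ∑ i, S T ω i * waterLevel V1 R D T ω i
        = ∑ i, S T ω i * V1 i + ∑ t ∈ Finset.Ico 1 T, ∑ i, S T ω i * R t ω i
          - ∑ t ∈ Finset.Ico 1 T, ∑ i, S T ω i * D t ω i := by
      simp only [waterLevel, mul_add, Finset.mul_sum, mul_sub]
      rw [Finset.sum_add_distrib, Finset.sum_comm]
      simp only [Finset.sum_sub_distrib]
      ring
    simp only [hF, Finset.sum_sub_distrib]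
    rw [one_mul, hw]
    ring
  have hrev : revenue P T S R V1 1 D
      = (∫ ω, (∑ i, S T ω i * V1 i
          + ∑ t ∈ Finset.Ico 1 T, ∑ i, S T ω i * R t ω i) ∂P) - ∫ ω, F ω ∂P := by
    rw [revenue]
    rw [integral_congr_ae (Filter.Eventually.of_forall fun ω => hpt ω)]
    exact integral_sub hg_int hF_int
  have hFnonneg : 0 ≤ ∫ ω, F ω ∂P := by
    rw [hF]
    rw [integral_finset_sum _ fun t ht => integrable_finset_sum _ fun i _ => hF_term_int t ht i]
    refine Finset.sum_nonneg fun t ht => ?_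
    rw [integral_finset_sum _ fun i _ => hF_term_int t ht i]
    refine Finset.sum_nonneg fun i _ => ?_
    rw [integral_sub (hint_SD t ht i) (hint_DS t ht i)]
    exact sub_nonneg.2 (hkey t ht i)
  rw [hrev]
  linarith
end
end

section
/- Solution of the dual problem in the martingale case: suppose α = 1, each coordinate process (S_i(t))_{t=1}^{T} is a martingale with respect to (G_t) and P, V(1) ≥ 0 and b ≥ 0 componentwise, R(t) ≥ 0 componentwise almost surely for all t, and m − V(1) − Σ_{s=1}^{t−1} R(s) ≥ 0 componentwise almost surely for all t = 1,…,T−1. Then the zero dual variable y = 0 is dual feasible with Φ(0) = E[S(T)·V(1) + Σ_{t=1}^{T−1} S(T)·R(t)], and every dual feasible variable y satisfies Φ(y) ≥ E[S(T)·V(1) + Σ_{t=1}^{T−1} S(T)·R(t)]; hence the optimal dual value is d* = E[S(T)·V(1) + Σ_{t=1}^{T−1} S(T)·R(t)], attained at y = 0. -/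
open MeasureTheory Finset

noncomputable section

/-- **Solution of the dual problem in the martingale case**: if `α = 1`, the price
process is a coordinatewise martingale w.r.t. `(G_t)`, `V(1) ≥ 0`, `b ≥ 0`,
`R(t) ≥ 0` a.s., and a.s. no dam would flood even without draining, then the zero
dual variable is dual feasible with value `d* = E[S(T)·V(1) + ∑_{t=1}^{T-1} S(T)·R(t)]`,
and every dual feasible variable `y` satisfies `Φ(y) ≥ d*`; hence the optimal dual
value is `d*`, attained at `y = 0`. -/
theorem dual_solution_martingale {Ω : Type*} {mΩ : MeasurableSpace Ω}
    (P : Measure Ω) [IsProbabilityMeasure P]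
    (T N : ℕ) (hT : 2 ≤ T) (hN : 1 ≤ N)
    (G : ℕ → MeasurableSpace Ω)
    (hG_mono : ∀ s t, s ≤ t → G s ≤ G t) (hG_le : ∀ t, G t ≤ mΩ)
    (S R : ℕ → Ω → Fin N → ℝ)
    (hS_adapted : ∀ t, 1 ≤ t → t ≤ T → Measurable[G t] (S t))
    (hS_bdd : ∃ C : ℝ, ∀ t ω i, |S t ω i| ≤ C)
    (hR_meas : ∀ t, Measurable (R t))
    (hR_bdd : ∃ C : ℝ, ∀ t ω i, |R t ω i| ≤ C)
    (V1 b m : Fin N → ℝ) (α : ℝ) (hα : α = 1)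
    (hmart : ∀ s t, 1 ≤ s → s ≤ t → t ≤ T → ∀ i,
      P[(fun ω => S t ω i)|G s] =ᵐ[P] fun ω => S s ω i)
    (hV1 : ∀ i, 0 ≤ V1 i) (hb : ∀ i, 0 ≤ b i)
    (hR_nonneg : ∀ᵐ ω ∂P, ∀ t, 1 ≤ t → t ≤ T - 1 → ∀ i, 0 ≤ R t ω i)
    (hno_flood : ∀ᵐ ω ∂P, ∀ t, 1 ≤ t → t ≤ T - 1 → ∀ i,
      0 ≤ m i - V1 i - ∑ s ∈ Finset.Ico 1 t, R s ω i) :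
    DualFeasible P T G S α
        (fun _ _ _ => 0) (fun _ _ _ => 0) (fun _ _ _ => 0) (fun _ _ _ => 0) ∧
    dualValue P T S R V1 b m α (fun _ _ _ => 0) (fun _ _ _ => 0) (fun _ _ _ => 0)
      = ∫ ω, (∑ i, S T ω i * V1 i
          + ∑ t ∈ Finset.Ico 1 T, ∑ i, S T ω i * R t ω i) ∂P ∧
    ∀ gam v lam w : ℕ → Ω → Fin N → ℝ,
      IsDualVariable P T gam v lam w → DualFeasible P T G S α gam v lam w →
      ∫ ω, (∑ i, S T ω i * V1 i
          + ∑ t ∈ Finset.Ico 1 T, ∑ i, S T ω i * R t ω i) ∂P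
        ≤ dualValue P T S R V1 b m α v lam w := by
  obtain ⟨C, hC⟩ := hS_bdd
  have hS_int : ∀ t, 1 ≤ t → t ≤ T → ∀ i, Integrable (fun ω => S t ω i) P := by
    intro t ht htT i
    have hmeas : Measurable (fun ω => S t ω i) :=
      ((measurable_pi_apply i).comp ((hS_adapted t ht htT).mono (hG_le t) le_rfl))
    exact ⟨hmeas.aestronglyMeasurable,
      HasFiniteIntegral.of_bounded (C := C) (Filter.Eventually.of_forall fun ω => by
        simpa using hC t ω i)⟩
  refine ⟨?_, ?_, ?_⟩
  · -- feasibility of zero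
    intro t ht1 ht2 A hA i
    have htT : t ≤ T := le_trans ht2 (Nat.sub_le T 1)
    have ht1T : t + 1 ≤ T := Nat.add_le_of_le_sub (le_trans (by norm_num) hT) ht2
    have hAmeas : MeasurableSet A := hG_le t A hA
    have hint1 : Integrable (fun ω => S (t + 1) ω i) P :=
      hS_int (t + 1) (by omega) ht1T i
    have hintT : Integrable (fun ω => S T ω i) P :=
      hS_int T (by omega) le_rfl i
    have key : ∀ u, t ≤ u → u ≤ T → 1 ≤ u →
        ∫ ω in A, S u ω i ∂P = ∫ ω in A, S t ω i ∂P := by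
      intro u htu huT hu1
      have h1 : ∫ ω in A, (P[(fun ω => S u ω i)|G t]) ω ∂P = ∫ ω in A, S u ω i ∂P :=
        setIntegral_condExp (hG_le t) (hS_int u hu1 huT i) hA
      have h2 : ∫ ω in A, (P[(fun ω => S u ω i)|G t]) ω ∂P = ∫ ω in A, S t ω i ∂P := by
        refine setIntegral_congr_ae hAmeas ?_
        filter_upwards [hmart t u ht1 htu huT i] with ω hω _
        exact hω
      rw [← h1, h2]
    simp only [hα, one_mul, Finset.sum_const_zero, add_zero, sub_zero]
    rw [integral_sub hint1.integrableOn hintT.integrableOn,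
      key (t + 1) (by omega) ht1T (by omega), key T htT le_rfl (by omega), sub_self]
  · -- value at zero
    simp [dualValue, hα]
  · -- lower bound
    intro gam v lam w hy hfeas
    rw [dualValue, hα, one_mul]
    have h0 : 0 ≤ ∑ t ∈ Finset.Ico 1 T, ∫ ω,
        (∑ i, lam t ω i * (V1 i + ∑ s ∈ Finset.Ico 1 t, R s ω i)
         + ∑ i, v t ω i * b i
         + ∑ i, w t ω i * (m i - V1 i - ∑ s ∈ Finset.Ico 1 t, R s ω i)) ∂P := by
      refine Finset.sum_nonneg fun t htmem => ?_
      obtain ⟨ht1, ht2⟩ := Finset.mem_Ico.mp htmem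
      have ht2' : t ≤ T - 1 := Nat.le_sub_one_of_lt ht2
      refine integral_nonneg_of_ae ?_
      filter_upwards [hy.2, hR_nonneg, hno_flood] with ω hpos hR hfl
      have hsum : ∀ i, 0 ≤ ∑ s ∈ Finset.Ico 1 t, R s ω i := by
        intro i
        refine Finset.sum_nonneg fun s hs => ?_
        obtain ⟨hs1, hs2⟩ := Finset.mem_Ico.mp hs
        exact hR s hs1 (by omega) i
      have h1 : 0 ≤ ∑ i, lam t ω i * (V1 i + ∑ s ∈ Finset.Ico 1 t, R s ω i) :=
        Finset.sum_nonneg fun i _ =>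
          mul_nonneg (hpos t ht1 ht2' i).2.2.1 (add_nonneg (hV1 i) (hsum i))
      have h2 : 0 ≤ ∑ i, v t ω i * b i :=
        Finset.sum_nonneg fun i _ => mul_nonneg (hpos t ht1 ht2' i).2.1 (hb i)
      have h3 : 0 ≤ ∑ i, w t ω i * (m i - V1 i - ∑ s ∈ Finset.Ico 1 t, R s ω i) :=
        Finset.sum_nonneg fun i _ =>
          mul_nonneg (hpos t ht1 ht2' i).2.2.2 (hfl t ht1 ht2' i)
      exact add_nonneg (add_nonneg h1 h2) h3
    linarith
end
end

section
/- Solution of the dual problem in the submartingale case: suppose α = 1, each coordinate process (S_i(t))_{t=1}^{T} is a submartingale with respect to (G_t) and P, V(1) ≥ 0 and b ≥ 0 componentwise, R(t) ≥ 0 componentwise almost surely for all t, and m − V(1) − Σ_{s=1}^{t−1} R(s) ≥ 0 componentwise almost surely for all t = 1,…,T−1. Then the dual variable y* defined by λ_t = v_t = w_t = 0 and γ_t := E[S(T) − S(t+1) | G_t] for t = 1,…,T−1 is almost surely nonnegative and dual feasible, Φ(y*) = E[S(T)·V(1) + Σ_{t=1}^{T−1} S(T)·R(t)], and every dual feasible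 variable y satisfies Φ(y) ≥ Φ(y*); hence y* attains the optimal dual value d* = E[S(T)·V(1) + Σ_{t=1}^{T−1} S(T)·R(t)]. -/
open MeasureTheory Finset

noncomputable section

/-- **Solution of the dual problem in the submartingale case**: if `α = 1`, the
price process is a coordinatewise submartingale w.r.t. `(G_t)`, `V(1) ≥ 0`,
`b ≥ 0`, `R(t) ≥ 0` a.s., and a.s. no dam would flood even without draining, then
the dual variable `y*` given by `λ = v = w = 0` and `γ_t = E[S(T) - S(t+1) | G_t]`
is a.s. nonnegative and dual feasible, has value
`d* = E[S(T)·V(1) + ∑_{t=1}^{T-1} S(T)·R(t)]`, and every dual feasible variable `y`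
satisfies `Φ(y) ≥ Φ(y*)`; hence `y*` attains the optimal dual value `d*`. -/
theorem dual_solution_submartingale {Ω : Type*} {mΩ : MeasurableSpace Ω}
    (P : Measure Ω) [IsProbabilityMeasure P]
    (T N : ℕ) (hT : 2 ≤ T) (hN : 1 ≤ N)
    (G : ℕ → MeasurableSpace Ω)
    (hG_mono : ∀ s t, s ≤ t → G s ≤ G t) (hG_le : ∀ t, G t ≤ mΩ)
    (S R : ℕ → Ω → Fin N → ℝ)
    (hS_adapted : ∀ t, 1 ≤ t → t ≤ T → Measurable[G t] (S t))
    (hS_bdd : ∃ C : ℝ, ∀ t ω i, |S t ω i| ≤ C)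
    (hR_meas : ∀ t, Measurable (R t))
    (hR_bdd : ∃ C : ℝ, ∀ t ω i, |R t ω i| ≤ C)
    (V1 b m : Fin N → ℝ) (α : ℝ) (hα : α = 1)
    (hsubmart : ∀ s t, 1 ≤ s → s ≤ t → t ≤ T → ∀ i,
      (fun ω => S s ω i) ≤ᵐ[P] P[(fun ω => S t ω i)|G s])
    (hV1 : ∀ i, 0 ≤ V1 i) (hb : ∀ i, 0 ≤ b i)
    (hR_nonneg : ∀ᵐ ω ∂P, ∀ t, 1 ≤ t → t ≤ T - 1 → ∀ i, 0 ≤ R t ω i)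
    (hno_flood : ∀ᵐ ω ∂P, ∀ t, 1 ≤ t → t ≤ T - 1 → ∀ i,
      0 ≤ m i - V1 i - ∑ s ∈ Finset.Ico 1 t, R s ω i)
    (gamStar : ℕ → Ω → Fin N → ℝ)
    (hgamStar : ∀ t, 1 ≤ t → t ≤ T - 1 → ∀ i,
      (fun ω => gamStar t ω i)
        = P[(fun ω => S T ω i - S (t + 1) ω i)|G t]) :
    (∀ᵐ ω ∂P, ∀ t, 1 ≤ t → t ≤ T - 1 → ∀ i, 0 ≤ gamStar t ω i) ∧
    DualFeasible P T G S α gamStar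
        (fun _ _ _ => 0) (fun _ _ _ => 0) (fun _ _ _ => 0) ∧
    dualValue P T S R V1 b m α (fun _ _ _ => 0) (fun _ _ _ => 0) (fun _ _ _ => 0)
      = ∫ ω, (∑ i, S T ω i * V1 i
          + ∑ t ∈ Finset.Ico 1 T, ∑ i, S T ω i * R t ω i) ∂P ∧
    ∀ gam v lam w : ℕ → Ω → Fin N → ℝ,
      IsDualVariable P T gam v lam w → DualFeasible P T G S α gam v lam w →
      dualValue P T S R V1 b m α (fun _ _ _ => 0) (fun _ _ _ => 0) (fun _ _ _ => 0)
        ≤ dualValue P T S R V1 b m α v lam w := by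
  obtain ⟨C, hC⟩ := hS_bdd
  have hT1 : 1 ≤ T - 1 := by omega
  have hSmeas : ∀ t, 1 ≤ t → t ≤ T → ∀ i, Measurable fun ω => S t ω i := by
    intro t h1 h2 i
    exact ((hS_adapted t h1 h2).mono (hG_le t) le_rfl).eval
  have hSint : ∀ t, 1 ≤ t → t ≤ T → ∀ i, Integrable (fun ω => S t ω i) P := by
    intro t h1 h2 i
    refine (integrable_const C).mono' (hSmeas t h1 h2 i).aestronglyMeasurable ?_
    exact Filter.Eventually.of_forall fun ω => by simpa using hC t ω i
  -- Part 1: nonnegativity of gamStar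
  have key : ∀ t, 1 ≤ t → t ≤ T - 1 → ∀ i, ∀ᵐ ω ∂P, 0 ≤ gamStar t ω i := by
    intro t h1 h2 i
    have ht1 : t + 1 ≤ T := by omega
    have h1' : 1 ≤ t + 1 := by omega
    have hiT := hSint T (by omega) le_rfl i
    have hit1 := hSint (t + 1) h1' ht1 i
    have hsub : Integrable (fun ω => S T ω i - S (t + 1) ω i) P := hiT.sub hit1
    have hdiff : (P[(fun ω => S T ω i - S (t + 1) ω i)|G t])
        =ᵐ[P] fun ω => (P[(fun ω => S T ω i)|G t]) ω - (P[(fun ω => S (t + 1) ω i)|G t]) ω :=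
      condExp_sub hiT hit1 (G t)
    have hmono : (P[(fun ω => S (t + 1) ω i)|G t])
        ≤ᵐ[P] (P[(P[(fun ω => S T ω i)|G (t + 1)])|G t]) :=
      condExp_mono hit1 integrable_condExp (hsubmart (t + 1) T h1' (by omega) le_rfl i)
    have htower : (P[(P[(fun ω => S T ω i)|G (t + 1)])|G t])
        =ᵐ[P] (P[(fun ω => S T ω i)|G t]) :=
      condExp_condExp_of_le (hG_mono t (t + 1) (by omega)) (hG_le (t + 1))
    filter_upwards [hdiff, hmono, htower] with ω e1 e2 e3
    rw [congrFun (hgamStar t h1 h2 i) ω, e1]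
    have := e2.trans_eq e3
    linarith
  refine ⟨?_, ?_, ?_, ?_⟩
  · rw [ae_all_iff]
    intro t
    by_cases h : 1 ≤ t ∧ t ≤ T - 1
    · filter_upwards [ae_all_iff.2 fun i => key t h.1 h.2 i] with ω hω _ _ i
      exact hω i
    · filter_upwards with ω h1 h2
      exact absurd ⟨h1, h2⟩ h
  -- Part 2: dual feasibility
  · intro t h1 h2 A hA i
    have ht1 : t + 1 ≤ T := by omega
    have hiT := hSint T (by omega) le_rfl i
    have hit1 := hSint (t + 1) (by omega) ht1 i
    have hsub : Integrable (fun ω => S T ω i - S (t + 1) ω i) P := hiT.sub hit1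
    have hset := setIntegral_condExp (hG_le t) hsub hA
    have e : (fun ω => S (t + 1) ω i - α * S T ω i + gamStar t ω i - 0
          - ∑ s ∈ Finset.Icc t (T - 1), (0 : ℝ)
          + ∑ s ∈ Finset.Icc (t + 1) (T - 1), (0 : ℝ))
        = fun ω => (S (t + 1) ω i - S T ω i)
          + (P[(fun ω => S T ω i - S (t + 1) ω i)|G t]) ω := by
      funext ω
      have := congrFun (hgamStar t h1 h2 i) ω
      simp only [hα, one_mul, Finset.sum_const_zero, sub_zero, add_zero] at *
      rw [← this]
    have hsub2 : Integrable (fun ω => S (t + 1) ω i - S T ω i) P := hit1.sub hiT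
    rw [e, integral_add hsub2.integrableOn integrable_condExp.integrableOn,
      hset, integral_sub hit1.integrableOn hiT.integrableOn,
      integral_sub hiT.integrableOn hit1.integrableOn]
    ring
  -- Part 3: value of y*
  · simp [dualValue, hα]
  -- Part 4: optimality
  · intro gam v lam w hy hfeas
    unfold dualValue
    have h0 : ∀ t ∈ Finset.Ico 1 T,
        (0 : ℝ) ≤ ∫ ω, (∑ i, lam t ω i * (V1 i + ∑ s ∈ Finset.Ico 1 t, R s ω i)
          + ∑ i, v t ω i * b i
          + ∑ i, w t ω i * (m i - V1 i - ∑ s ∈ Finset.Ico 1 t, R s ω i)) ∂P := by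
      intro t ht
      rw [Finset.mem_Ico] at ht
      refine integral_nonneg_of_ae ?_
      filter_upwards [hy.2, hR_nonneg, hno_flood] with ω hyω hRω hfω
      have h1 : 1 ≤ t := ht.1
      have h2 : t ≤ T - 1 := by omega
      refine add_nonneg (add_nonneg ?_ ?_) ?_
      · refine Finset.sum_nonneg fun i _ => mul_nonneg (hyω t h1 h2 i).2.2.1 ?_
        refine add_nonneg (hV1 i) (Finset.sum_nonneg fun s hs => ?_)
        rw [Finset.mem_Ico] at hs
        exact hRω s hs.1 (by omega) i
      · exact Finset.sum_nonneg fun i _ =>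
          mul_nonneg (hyω t h1 h2 i).2.1 (hb i)
      · exact Finset.sum_nonneg fun i _ =>
          mul_nonneg (hyω t h1 h2 i).2.2.2 (hfω t h1 h2 i)
    have hsum : (0 : ℝ) ≤ ∑ t ∈ Finset.Ico 1 T, ∫ ω,
        (∑ i, lam t ω i * (V1 i + ∑ s ∈ Finset.Ico 1 t, R s ω i)
          + ∑ i, v t ω i * b i
          + ∑ i, w t ω i * (m i - V1 i - ∑ s ∈ Finset.Ico 1 t, R s ω i)) ∂P :=
      Finset.sum_nonneg h0
    simp only [zero_mul, mul_zero, Finset.sum_const_zero, add_zero, zero_add, integral_zero]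
    linarith
end
end

section
/- Weak duality for the hydropower problem with a total production constraint: let C̃ ∈ ℝ. If D is an admissible drain process that is feasible for the total-production problem (almost surely, D(t) ≥ 0 componentwise, Σ_{i=1}^{N} D_i(t) ≤ C̃, and D(t) ≤ V(t) ≤ m componentwise for all t = 1,…,T−1), and y = (γ_t, v_t, λ_t, w_t)_{t=1}^{T−1} is a total-production dual feasible variable, then J(D) ≤ Φ̃(y). -/
open MeasureTheory Finset

noncomputable section

/-- Feasibility for the total-production problem: almost surely, `D(t) ≥ 0`
componentwise, `∑_{i=1}^N D_i(t) ≤ C̃`, and `D(t) ≤ V(t) ≤ m` componentwise,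
for all `t = 1, …, T-1`. -/
def FeasibleDrainTotal {Ω : Type*} {N : ℕ} [MeasurableSpace Ω] (P : Measure Ω)
    (T : ℕ) (R : ℕ → Ω → Fin N → ℝ) (V1 m : Fin N → ℝ) (Ctil : ℝ)
    (D : ℕ → Ω → Fin N → ℝ) : Prop :=
  ∀ᵐ ω ∂P, ∀ t, 1 ≤ t → t ≤ T - 1 →
    (∀ i, 0 ≤ D t ω i) ∧ (∑ i, D t ω i) ≤ Ctil ∧
    (∀ i, D t ω i ≤ waterLevel V1 R D t ω i ∧ waterLevel V1 R D t ω i ≤ m i)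

/-- A total-production dual variable `y = (γ_t, v_t, λ_t, w_t)_{t=1}^{T-1}`:
`γ_t, λ_t, w_t : Ω → ℝ^N` and `v_t : Ω → ℝ` integrable and a.s. nonnegative. -/
def IsDualVariableTotal {Ω : Type*} {N : ℕ} [MeasurableSpace Ω] (P : Measure Ω)
    (T : ℕ) (gam lam w : ℕ → Ω → Fin N → ℝ) (v : ℕ → Ω → ℝ) : Prop :=
  (∀ t, 1 ≤ t → t ≤ T - 1 → Integrable (v t) P ∧ ∀ i,
    Integrable (fun ω => gam t ω i) P ∧
    Integrable (fun ω => lam t ω i) P ∧ Integrable (fun ω => w t ω i) P) ∧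
  (∀ᵐ ω ∂P, ∀ t, 1 ≤ t → t ≤ T - 1 →
    0 ≤ v t ω ∧ ∀ i, 0 ≤ gam t ω i ∧ 0 ≤ lam t ω i ∧ 0 ≤ w t ω i)

/-- Total-production dual feasibility: for every `t = 1, …, T-1`, every
`i = 1, …, N` and every `A ∈ G_t`,
`∫_A (S_i(t+1) - α S_i(T) + γ_{i,t} - v_t - ∑_{s=t}^{T-1} λ_{i,s}
  + ∑_{s=t+1}^{T-1} w_{i,s}) dP = 0`. -/
def DualFeasibleTotal {Ω : Type*} {N : ℕ} [MeasurableSpace Ω] (P : Measure Ω)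
    (T : ℕ) (G : ℕ → MeasurableSpace Ω) (S : ℕ → Ω → Fin N → ℝ) (α : ℝ)
    (gam lam w : ℕ → Ω → Fin N → ℝ) (v : ℕ → Ω → ℝ) : Prop :=
  ∀ t, 1 ≤ t → t ≤ T - 1 → ∀ i, ∀ A : Set Ω, MeasurableSet[G t] A →
    ∫ ω in A, (S (t + 1) ω i - α * S T ω i + gam t ω i - v t ω
      - ∑ s ∈ Finset.Icc t (T - 1), lam s ω i
      + ∑ s ∈ Finset.Icc (t + 1) (T - 1), w s ω i) ∂P = 0

/-- The total-production dual value
`Φ̃(y) = α E[S(T)·V(1) + ∑_{t=1}^{T-1} S(T)·R(t)]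
  + ∑_{t=1}^{T-1} E[λ_t·(V(1) + ∑_{s=1}^{t-1} R(s)) + C̃ v_t
  + w_t·(m - V(1) - ∑_{s=1}^{t-1} R(s))]`. -/
def dualValueTotal {Ω : Type*} {N : ℕ} [MeasurableSpace Ω] (P : Measure Ω)
    (T : ℕ) (S R : ℕ → Ω → Fin N → ℝ) (V1 m : Fin N → ℝ) (Ctil : ℝ) (α : ℝ)
    (lam w : ℕ → Ω → Fin N → ℝ) (v : ℕ → Ω → ℝ) : ℝ :=
  α * ∫ ω, (∑ i, S T ω i * V1 i
      + ∑ t ∈ Finset.Ico 1 T, ∑ i, S T ω i * R t ω i) ∂P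
  + ∑ t ∈ Finset.Ico 1 T, ∫ ω,
      (∑ i, lam t ω i * (V1 i + ∑ s ∈ Finset.Ico 1 t, R s ω i)
       + Ctil * v t ω
       + ∑ i, w t ω i * (m i - V1 i - ∑ s ∈ Finset.Ico 1 t, R s ω i)) ∂P

namespace WeakDualAux
variable {Ω : Type*} [mΩ : MeasurableSpace Ω] {P : Measure Ω}

lemma integrable_of_bdd_meas [IsFiniteMeasure P] {f : Ω → ℝ} (hf : Measurable f)
    {C : ℝ} (hC : ∀ ω, |f ω| ≤ C) : Integrable f P :=
  ⟨hf.aestronglyMeasurable, HasFiniteIntegral.of_bounded (C := C)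
    (Filter.Eventually.of_forall fun ω => by simpa [Real.norm_eq_abs] using hC ω)⟩

lemma mul_bdd'' {f g : Ω → ℝ} (hf : Integrable f P)
    (hg : AEStronglyMeasurable g P) (hC : ∃ C, ∀ ω, |g ω| ≤ C) :
    Integrable (fun ω => f ω * g ω) P := by
  obtain ⟨C, hC⟩ := hC
  exact (hf.bdd_mul hg (Filter.Eventually.of_forall fun ω => by simpa [Real.norm_eq_abs] using hC ω)).congr
    (Filter.Eventually.of_forall fun ω => mul_comm _ _)

lemma bdd_mul' {f g : Ω → ℝ} (hf : Integrable f P)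
    (hg : AEStronglyMeasurable g P) (hC : ∃ C, ∀ ω, |g ω| ≤ C) :
    Integrable (fun ω => g ω * f ω) P := by
  obtain ⟨C, hC⟩ := hC
  exact hf.bdd_mul hg (Filter.Eventually.of_forall fun ω => by simpa [Real.norm_eq_abs] using hC ω)

lemma exists_bound_finset_sum (s : Finset ℕ) (f : ℕ → Ω → ℝ)
    (h : ∀ t ∈ s, ∃ C, ∀ ω, |f t ω| ≤ C) : ∃ C, ∀ ω, |∑ t ∈ s, f t ω| ≤ C := by
  choose C hC using h
  refine ⟨∑ t ∈ s.attach, C t t.2, fun ω => ?_⟩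
  calc |∑ t ∈ s, f t ω| = |∑ t ∈ s.attach, f t.1 ω| :=
        congrArg abs (Finset.sum_attach s fun t => f t ω).symm
    _ ≤ ∑ t ∈ s.attach, |f t.1 ω| := Finset.abs_sum_le_sum_abs _ _
    _ ≤ ∑ t ∈ s.attach, C t t.2 := Finset.sum_le_sum fun t _ => hC t t.2 ω

lemma integral_mul_eq_zero_of_setIntegral_eq_zero [IsProbabilityMeasure P]
    {G : MeasurableSpace Ω} (hG : G ≤ mΩ) {f d : Ω → ℝ} (hf : Integrable f P)
    (hd : Measurable[G] d) {C : ℝ} (hdC : ∀ ω, |d ω| ≤ C)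
    (h0 : ∀ A : Set Ω, MeasurableSet[G] A → ∫ ω in A, f ω ∂P = 0) :
    ∫ ω, d ω * f ω ∂P = 0 := by
  letI : MeasurableSpace Ω := mΩ
  have hdm : AEStronglyMeasurable d P := (hd.mono hG le_rfl).aestronglyMeasurable
  have hdf : Integrable (fun ω => d ω * f ω) P :=
    hf.bdd_mul hdm (Filter.Eventually.of_forall fun ω => by simpa [Real.norm_eq_abs] using hdC ω)
  have hzero : (fun _ => (0 : ℝ)) =ᵐ[P] P[f|G] := by
    refine ae_eq_condExp_of_forall_setIntegral_eq hG hf ?_ ?_ ?_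
    · exact fun s _ _ => integrableOn_zero
    · exact fun s hs _ => by simp [h0 s hs]
    · exact StronglyMeasurable.aestronglyMeasurable (@stronglyMeasurable_const Ω ℝ G _ 0)
  have h1 : P[fun ω => d ω * f ω|G] =ᵐ[P] fun ω => d ω * (P[f|G]) ω :=
    condExp_mul_of_stronglyMeasurable_left hd.stronglyMeasurable hdf hf
  have h2 : (fun ω => d ω * (P[f|G]) ω) =ᵐ[P] fun _ => (0 : ℝ) := by
    filter_upwards [hzero] with ω hω
    simp [← hω]
  calc ∫ ω, d ω * f ω ∂P = ∫ ω, (P[fun ω => d ω * f ω|G]) ω ∂P :=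
        (integral_condExp (f := fun ω => d ω * f ω) hG).symm
    _ = 0 := by rw [integral_congr_ae (h1.trans h2)]; simp

end WeakDualAux

open WeakDualAux in
/-- **Weak duality for the hydropower problem with a total production
constraint**: if `D` is an admissible drain process, feasible for the
total-production problem, and `y` is a total-production dual feasible variable,
then `J(D) ≤ Φ̃(y)`. -/
theorem weak_duality_total {Ω : Type*} {mΩ : MeasurableSpace Ω}
    (P : Measure Ω) [IsProbabilityMeasure P]
    (T N : ℕ) (hT : 2 ≤ T) (hN : 1 ≤ N)
    (G : ℕ → MeasurableSpace Ω)
    (hG_mono : ∀ s t, s ≤ t → G s ≤ G t) (hG_le : ∀ t, G t ≤ mΩ)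
    (S R : ℕ → Ω → Fin N → ℝ)
    (hS_adapted : ∀ t, 1 ≤ t → t ≤ T → Measurable[G t] (S t))
    (hS_bdd : ∃ C : ℝ, ∀ t ω i, |S t ω i| ≤ C)
    (hR_meas : ∀ t, Measurable (R t))
    (hR_bdd : ∃ C : ℝ, ∀ t ω i, |R t ω i| ≤ C)
    (V1 m : Fin N → ℝ) (Ctil : ℝ) (α : ℝ)
    (D : ℕ → Ω → Fin N → ℝ)
    (hD_adm : Admissible T G D)
    (hD_feas : FeasibleDrainTotal P T R V1 m Ctil D)
    (gam lam w : ℕ → Ω → Fin N → ℝ) (v : ℕ → Ω → ℝ)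
    (hy : IsDualVariableTotal P T gam lam w v)
    (hy_feas : DualFeasibleTotal P T G S α gam lam w v) :
    revenue P T S R V1 α D ≤ dualValueTotal P T S R V1 m Ctil α lam w v := by
  classical
  obtain ⟨CS, hCS⟩ := hS_bdd
  obtain ⟨CR, hCR⟩ := hR_bdd
  -- basic membership fact
  have htI : ∀ t ∈ Finset.Ico 1 T, 1 ≤ t ∧ t ≤ T - 1 := by
    intro t ht; rw [Finset.mem_Ico] at ht; omega
  -- componentwise measurability and integrability of S
  have hSm : ∀ t, 1 ≤ t → t ≤ T → ∀ i : Fin N, Measurable fun ω => S t ω i :=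
    fun t h1 h2 i => ((hS_adapted t h1 h2).mono (hG_le t) le_rfl).eval
  have hSint : ∀ t, 1 ≤ t → t ≤ T → ∀ i : Fin N, Integrable (fun ω => S t ω i) P :=
    fun t h1 h2 i => integrable_of_bdd_meas (hSm t h1 h2 i) (fun ω => hCS t ω i)
  have hRm : ∀ t (i : Fin N), Measurable fun ω => R t ω i := fun t i => (hR_meas t).eval
  -- D facts
  have hDm : ∀ t ∈ Finset.Ico 1 T, ∀ i : Fin N, Measurable fun ω => D t ω i := fun t ht i =>
    ((hD_adm t (htI t ht).1 (htI t ht).2).1.mono (hG_le t) le_rfl).eval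
  have hDb : ∀ t ∈ Finset.Ico 1 T, ∃ C, ∀ ω (i : Fin N), |D t ω i| ≤ C := fun t ht =>
    (hD_adm t (htI t ht).1 (htI t ht).2).2
  -- dual integrability
  have hvint : ∀ t, 1 ≤ t → t ≤ T - 1 → Integrable (v t) P := fun t h1 h2 => (hy.1 t h1 h2).1
  have hgint : ∀ t, 1 ≤ t → t ≤ T - 1 → ∀ i, Integrable (fun ω => gam t ω i) P :=
    fun t h1 h2 i => ((hy.1 t h1 h2).2 i).1
  have hlint : ∀ t, 1 ≤ t → t ≤ T - 1 → ∀ i, Integrable (fun ω => lam t ω i) P :=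
    fun t h1 h2 i => ((hy.1 t h1 h2).2 i).2.1
  have hwint : ∀ t, 1 ≤ t → t ≤ T - 1 → ∀ i, Integrable (fun ω => w t ω i) P :=
    fun t h1 h2 i => ((hy.1 t h1 h2).2 i).2.2
  -- the dual-feasibility integrand
  set F : ℕ → Fin N → Ω → ℝ := fun t i ω =>
    S (t + 1) ω i - α * S T ω i + gam t ω i - v t ω
      - ∑ s ∈ Finset.Icc t (T - 1), lam s ω i
      + ∑ s ∈ Finset.Icc (t + 1) (T - 1), w s ω i with hFdef
  -- the "bracket"
  set B : ℕ → Fin N → Ω → ℝ := fun t i ω =>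
    α * S T ω i - gam t ω i + v t ω
      + ∑ s ∈ Finset.Icc t (T - 1), lam s ω i
      - ∑ s ∈ Finset.Icc (t + 1) (T - 1), w s ω i with hBdef
  have hFint : ∀ t ∈ Finset.Ico 1 T, ∀ i, Integrable (F t i) P := by
    intro t ht i
    obtain ⟨ht1, ht2⟩ := htI t ht
    have h1 : Integrable (fun ω => S (t + 1) ω i) P := hSint (t + 1) (by omega) (by omega) i
    have h2 : Integrable (fun ω => α * S T ω i) P := (hSint T (by omega) le_rfl i).const_mul α
    have h5 : Integrable (fun ω => ∑ s ∈ Finset.Icc t (T - 1), lam s ω i) P :=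
      integrable_finset_sum _ fun s hs => by
        rw [Finset.mem_Icc] at hs; exact hlint s (by omega) (by omega) i
    have h6 : Integrable (fun ω => ∑ s ∈ Finset.Icc (t + 1) (T - 1), w s ω i) P :=
      integrable_finset_sum _ fun s hs => by
        rw [Finset.mem_Icc] at hs; exact hwint s (by omega) (by omega) i
    exact ((((h1.sub h2).add (hgint t ht1 ht2 i)).sub (hvint t ht1 ht2)).sub h5).add h6
  have hBint : ∀ t ∈ Finset.Ico 1 T, ∀ i, Integrable (B t i) P := by
    intro t ht i
    obtain ⟨ht1, ht2⟩ := htI t ht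
    have h2 : Integrable (fun ω => α * S T ω i) P := (hSint T (by omega) le_rfl i).const_mul α
    have h5 : Integrable (fun ω => ∑ s ∈ Finset.Icc t (T - 1), lam s ω i) P :=
      integrable_finset_sum _ fun s hs => by
        rw [Finset.mem_Icc] at hs; exact hlint s (by omega) (by omega) i
    have h6 : Integrable (fun ω => ∑ s ∈ Finset.Icc (t + 1) (T - 1), w s ω i) P :=
      integrable_finset_sum _ fun s hs => by
        rw [Finset.mem_Icc] at hs; exact hwint s (by omega) (by omega) i
    exact (((h2.sub (hgint t ht1 ht2 i)).add (hvint t ht1 ht2)).add h5).sub h6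
  -- key: ∫ D_{ti} F_{ti} = 0
  have hKey : ∀ t ∈ Finset.Ico 1 T, ∀ i, ∫ ω, D t ω i * F t i ω ∂P = 0 := by
    intro t ht i
    obtain ⟨ht1, ht2⟩ := htI t ht
    obtain ⟨C, hC⟩ := hDb t ht
    have hd : Measurable[G t] fun ω => D t ω i := by
      letI : MeasurableSpace Ω := G t
      exact Measurable.eval (hD_adm t ht1 ht2).1
    exact integral_mul_eq_zero_of_setIntegral_eq_zero (hG_le t) (hFint t ht i)
      hd (fun ω => hC ω i)
      (fun A hA => hy_feas t ht1 ht2 i A hA)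
  -- integrability of various products
  have hDFint : ∀ t ∈ Finset.Ico 1 T, ∀ i, Integrable (fun ω => D t ω i * F t i ω) P := by
    intro t ht i
    obtain ⟨C, hC⟩ := hDb t ht
    exact bdd_mul' (hFint t ht i) ((hDm t ht i).aestronglyMeasurable) ⟨C, fun ω => hC ω i⟩
  have hDBint : ∀ t ∈ Finset.Ico 1 T, ∀ i, Integrable (fun ω => D t ω i * B t i ω) P := by
    intro t ht i
    obtain ⟨C, hC⟩ := hDb t ht
    exact bdd_mul' (hBint t ht i) ((hDm t ht i).aestronglyMeasurable) ⟨C, fun ω => hC ω i⟩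
  have hWLm : ∀ i : Fin N, Measurable fun ω => waterLevel V1 R D T ω i := by
    intro i
    simp only [waterLevel]
    exact measurable_const.add
      (Finset.measurable_sum _ fun s hs => (hRm s i).sub (hDm s hs i))
  have hWLb : ∀ i : Fin N, ∃ C, ∀ ω, |waterLevel V1 R D T ω i| ≤ C := by
    intro i
    obtain ⟨C, hC⟩ := exists_bound_finset_sum (Finset.Ico 1 T)
      (fun s ω => R s ω i - D s ω i) (fun s hs => by
        obtain ⟨C', hC'⟩ := hDb s hs
        exact ⟨CR + C', fun ω => (abs_sub _ _).trans
          (add_le_add (hCR s ω i) (hC' ω i))⟩)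
    exact ⟨|V1 i| + C, fun ω => (abs_add_le _ _).trans (add_le_add le_rfl (hC ω))⟩
  have hSTWLint : ∀ i : Fin N, Integrable (fun ω => S T ω i * waterLevel V1 R D T ω i) P :=
    fun i => mul_bdd'' (hSint T (by omega) le_rfl i) (hWLm i).aestronglyMeasurable (hWLb i)
  -- H : the rewritten revenue integrand
  set H : Ω → ℝ := fun ω =>
    ∑ t ∈ Finset.Ico 1 T, ∑ i, D t ω i * B t i ω
      + α * ∑ i, S T ω i * waterLevel V1 R D T ω i with hHdef
  have hHint : Integrable H P := by
    refine (integrable_finset_sum _ fun t ht => integrable_finset_sum _ fun i _ =>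
      hDBint t ht i).add ?_
    exact (integrable_finset_sum _ fun i _ => hSTWLint i).const_mul α
  have hDFsumint : Integrable (fun ω => ∑ t ∈ Finset.Ico 1 T, ∑ i, D t ω i * F t i ω) P :=
    integrable_finset_sum _ fun t ht => integrable_finset_sum _ fun i _ => hDFint t ht i
  -- Step C : revenue = ∫ H
  have hrev : revenue P T S R V1 α D = ∫ ω, H ω ∂P := by
    have hpt : ∀ ω, (∑ t ∈ Finset.Ico 1 T, ∑ i, D t ω i * S (t + 1) ω i
        + α * ∑ i, S T ω i * waterLevel V1 R D T ω i)
        = H ω + ∑ t ∈ Finset.Ico 1 T, ∑ i, D t ω i * F t i ω := by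
      intro ω
      have h1 : ∑ t ∈ Finset.Ico 1 T, ∑ i, D t ω i * S (t + 1) ω i
          = ∑ t ∈ Finset.Ico 1 T, ∑ i, (D t ω i * B t i ω + D t ω i * F t i ω) := by
        refine Finset.sum_congr rfl fun t _ => Finset.sum_congr rfl fun i _ => ?_
        simp only [hBdef, hFdef]; ring
      rw [hHdef]
      simp only [h1, Finset.sum_add_distrib]
      ring
    have hsum0 : ∫ ω, (∑ t ∈ Finset.Ico 1 T, ∑ i, D t ω i * F t i ω) ∂P = 0 := by
      rw [integral_finset_sum _ fun t ht => integrable_finset_sum _ fun i _ => hDFint t ht i]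
      refine Finset.sum_eq_zero fun t ht => ?_
      rw [integral_finset_sum _ fun i _ => hDFint t ht i]
      exact Finset.sum_eq_zero fun i _ => hKey t ht i
    calc revenue P T S R V1 α D
        = ∫ ω, (H ω + ∑ t ∈ Finset.Ico 1 T, ∑ i, D t ω i * F t i ω) ∂P := by
          rw [revenue]; exact integral_congr_ae (Filter.Eventually.of_forall hpt)
      _ = ∫ ω, H ω ∂P + ∫ ω, (∑ t ∈ Finset.Ico 1 T, ∑ i, D t ω i * F t i ω) ∂P :=
          integral_add hHint hDFsumint
      _ = ∫ ω, H ω ∂P := by rw [hsum0, add_zero]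
  -- K : the dual integrand
  set K : Ω → ℝ := fun ω =>
    α * (∑ i, S T ω i * V1 i + ∑ t ∈ Finset.Ico 1 T, ∑ i, S T ω i * R t ω i)
      + ∑ t ∈ Finset.Ico 1 T,
        (∑ i, lam t ω i * (V1 i + ∑ s ∈ Finset.Ico 1 t, R s ω i)
          + Ctil * v t ω
          + ∑ i, w t ω i * (m i - V1 i - ∑ s ∈ Finset.Ico 1 t, R s ω i)) with hKdef
  have hf1int : Integrable (fun ω => ∑ i, S T ω i * V1 i
      + ∑ t ∈ Finset.Ico 1 T, ∑ i, S T ω i * R t ω i) P := by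
    refine (integrable_finset_sum _ fun i _ => (hSint T (by omega) le_rfl i).mul_const _).add ?_
    refine integrable_finset_sum _ fun t ht => integrable_finset_sum _ fun i _ => ?_
    exact mul_bdd'' (hSint T (by omega) le_rfl i) (hRm t i).aestronglyMeasurable
      ⟨CR, fun ω => hCR t ω i⟩
  have hKTint : ∀ t ∈ Finset.Ico 1 T, Integrable (fun ω =>
      ∑ i, lam t ω i * (V1 i + ∑ s ∈ Finset.Ico 1 t, R s ω i)
        + Ctil * v t ω
        + ∑ i, w t ω i * (m i - V1 i - ∑ s ∈ Finset.Ico 1 t, R s ω i)) P := by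
    intro t ht
    obtain ⟨ht1, ht2⟩ := htI t ht
    have hRb : ∀ i : Fin N, ∃ C, ∀ ω, |∑ s ∈ Finset.Ico 1 t, R s ω i| ≤ C := fun i =>
      exists_bound_finset_sum _ _ fun s _ => ⟨CR, fun ω => hCR s ω i⟩
    have hRsm : ∀ i : Fin N, Measurable fun ω => ∑ s ∈ Finset.Ico 1 t, R s ω i := fun i =>
      Finset.measurable_sum _ fun s _ => hRm s i
    have h1 : Integrable (fun ω => ∑ i, lam t ω i * (V1 i + ∑ s ∈ Finset.Ico 1 t, R s ω i)) P := by
      refine integrable_finset_sum _ fun i _ => ?_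
      obtain ⟨C, hC⟩ := hRb i
      exact mul_bdd'' (hlint t ht1 ht2 i) (measurable_const.add (hRsm i)).aestronglyMeasurable
        ⟨|V1 i| + C, fun ω => (abs_add_le _ _).trans (add_le_add le_rfl (hC ω))⟩
    have h2 : Integrable (fun ω => Ctil * v t ω) P := (hvint t ht1 ht2).const_mul Ctil
    have h3 : Integrable (fun ω =>
        ∑ i, w t ω i * (m i - V1 i - ∑ s ∈ Finset.Ico 1 t, R s ω i)) P := by
      refine integrable_finset_sum _ fun i _ => ?_
      obtain ⟨C, hC⟩ := hRb i
      refine mul_bdd'' (hwint t ht1 ht2 i)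
        ((measurable_const.sub (hRsm i)).aestronglyMeasurable) ⟨|m i - V1 i| + C, fun ω => ?_⟩
      exact (abs_sub _ _).trans (add_le_add le_rfl (hC ω))
    exact (h1.add h2).add h3
  have hKint : Integrable K P :=
    (hf1int.const_mul α).add (integrable_finset_sum _ hKTint)
  -- Step E : ∫ K = dual value
  have hdual : ∫ ω, K ω ∂P = dualValueTotal P T S R V1 m Ctil α lam w v := by
    rw [hKdef]
    rw [dualValueTotal]
    rw [integral_add (hf1int.const_mul α) (integrable_finset_sum _ hKTint)]
    rw [integral_const_mul, integral_finset_sum _ hKTint]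
  -- Step D : a.e. pointwise inequality H ≤ K
  have hae : ∀ᵐ ω ∂P, H ω ≤ K ω := by
    filter_upwards [hD_feas, hy.2] with ω hfeas hpos
    simp only [hHdef, hKdef]
    have e1 : ∑ t ∈ Finset.Ico 1 T, ∑ i, D t ω i * B t i ω
        = ∑ t ∈ Finset.Ico 1 T, ∑ i, D t ω i * (α * S T ω i)
          - ∑ t ∈ Finset.Ico 1 T, ∑ i, D t ω i * gam t ω i
          + ∑ t ∈ Finset.Ico 1 T, ∑ i, D t ω i * v t ω
          + ∑ t ∈ Finset.Ico 1 T, ∑ i, D t ω i * ∑ s ∈ Finset.Icc t (T - 1), lam s ω i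
          - ∑ t ∈ Finset.Ico 1 T, ∑ i, D t ω i * ∑ s ∈ Finset.Icc (t + 1) (T - 1), w s ω i := by
      simp only [hBdef, mul_add, mul_sub, Finset.sum_add_distrib, Finset.sum_sub_distrib]
    have swapl : ∑ t ∈ Finset.Ico 1 T, ∑ i, D t ω i * ∑ s ∈ Finset.Icc t (T - 1), lam s ω i
        = ∑ s ∈ Finset.Ico 1 T, ∑ i, lam s ω i * ∑ t ∈ Finset.Icc 1 s, D t ω i := by
      have h1 : ∀ t ∈ Finset.Ico 1 T, ∑ i, D t ω i * ∑ s ∈ Finset.Icc t (T - 1), lam s ω i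
          = ∑ s ∈ Finset.Icc t (T - 1), ∑ i, D t ω i * lam s ω i := by
        intro t _
        simp only [Finset.mul_sum]
        exact Finset.sum_comm
      rw [Finset.sum_congr rfl h1]
      rw [Finset.sum_comm' (s := Finset.Ico 1 T) (t := fun t => Finset.Icc t (T - 1))
        (t' := Finset.Ico 1 T) (s' := fun s => Finset.Icc 1 s)
        (by intro x y; simp only [Finset.mem_Ico, Finset.mem_Icc]; omega)]
      refine Finset.sum_congr rfl fun s _ => ?_
      rw [Finset.sum_comm]
      refine Finset.sum_congr rfl fun i _ => ?_
      rw [Finset.mul_sum]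
      exact Finset.sum_congr rfl fun t _ => mul_comm _ _
    have swapw : ∑ t ∈ Finset.Ico 1 T, ∑ i, D t ω i * ∑ s ∈ Finset.Icc (t + 1) (T - 1), w s ω i
        = ∑ s ∈ Finset.Ico 1 T, ∑ i, w s ω i * ∑ t ∈ Finset.Ico 1 s, D t ω i := by
      have h1 : ∀ t ∈ Finset.Ico 1 T, ∑ i, D t ω i * ∑ s ∈ Finset.Icc (t + 1) (T - 1), w s ω i
          = ∑ s ∈ Finset.Icc (t + 1) (T - 1), ∑ i, D t ω i * w s ω i := by
        intro t _
        simp only [Finset.mul_sum]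
        exact Finset.sum_comm
      rw [Finset.sum_congr rfl h1]
      rw [Finset.sum_comm' (s := Finset.Ico 1 T) (t := fun t => Finset.Icc (t + 1) (T - 1))
        (t' := Finset.Ico 1 T) (s' := fun s => Finset.Ico 1 s)
        (by intro x y; simp only [Finset.mem_Ico, Finset.mem_Icc]; omega)]
      refine Finset.sum_congr rfl fun s _ => ?_
      rw [Finset.sum_comm]
      refine Finset.sum_congr rfl fun i _ => ?_
      rw [Finset.mul_sum]
      exact Finset.sum_congr rfl fun t _ => mul_comm _ _
    have hαid : ∑ t ∈ Finset.Ico 1 T, ∑ i, D t ω i * (α * S T ω i)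
        + α * ∑ i, S T ω i * waterLevel V1 R D T ω i
        = α * (∑ i, S T ω i * V1 i + ∑ t ∈ Finset.Ico 1 T, ∑ i, S T ω i * R t ω i) := by
      have l1 : ∑ t ∈ Finset.Ico 1 T, ∑ i, D t ω i * (α * S T ω i)
          = α * ∑ i, S T ω i * ∑ t ∈ Finset.Ico 1 T, D t ω i := by
        rw [Finset.sum_comm, Finset.mul_sum]
        refine Finset.sum_congr rfl fun i _ => ?_
        rw [← Finset.sum_mul]
        ring
      have l2 : ∑ t ∈ Finset.Ico 1 T, ∑ i, S T ω i * R t ω i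
          = ∑ i, S T ω i * ∑ t ∈ Finset.Ico 1 T, R t ω i := by
        rw [Finset.sum_comm]
        exact Finset.sum_congr rfl fun i _ => (Finset.mul_sum _ _ _).symm
      rw [l1, l2, ← mul_add]
      congr 1
      rw [← Finset.sum_add_distrib, ← Finset.sum_add_distrib]
      refine Finset.sum_congr rfl fun i _ => ?_
      simp only [waterLevel, Finset.sum_sub_distrib]
      ring
    have hG0 : 0 ≤ ∑ t ∈ Finset.Ico 1 T, ∑ i, D t ω i * gam t ω i :=
      Finset.sum_nonneg fun t ht => Finset.sum_nonneg fun i _ =>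
        mul_nonneg ((hfeas t (htI t ht).1 (htI t ht).2).1 i)
          (((hpos t (htI t ht).1 (htI t ht).2).2 i).1)
    have hVv : ∑ t ∈ Finset.Ico 1 T, ∑ i, D t ω i * v t ω
        ≤ ∑ t ∈ Finset.Ico 1 T, Ctil * v t ω := by
      refine Finset.sum_le_sum fun t ht => ?_
      rw [← Finset.sum_mul]
      exact mul_le_mul_of_nonneg_right (hfeas t (htI t ht).1 (htI t ht).2).2.1
        (hpos t (htI t ht).1 (htI t ht).2).1
    have hcum : ∀ s ∈ Finset.Ico 1 T, ∀ i : Fin N,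
        ∑ t ∈ Finset.Icc 1 s, D t ω i ≤ V1 i + ∑ u ∈ Finset.Ico 1 s, R u ω i := by
      intro s hs i
      obtain ⟨hs1, hs2⟩ := htI s hs
      have hD_le := ((hfeas s hs1 hs2).2.2 i).1
      simp only [waterLevel, Finset.sum_sub_distrib] at hD_le
      have hsplit : ∑ t ∈ Finset.Icc 1 s, D t ω i
          = ∑ t ∈ Finset.Ico 1 s, D t ω i + D s ω i := by
        rw [← Finset.Ico_add_one_right_eq_Icc, Finset.sum_Ico_succ_top hs1]
      linarith
    have hcum2 : ∀ s ∈ Finset.Ico 1 T, ∀ i : Fin N,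
        -(∑ t ∈ Finset.Ico 1 s, D t ω i) ≤ m i - V1 i - ∑ u ∈ Finset.Ico 1 s, R u ω i := by
      intro s hs i
      obtain ⟨hs1, hs2⟩ := htI s hs
      have hm' := ((hfeas s hs1 hs2).2.2 i).2
      simp only [waterLevel, Finset.sum_sub_distrib] at hm'
      linarith
    have hL : ∑ s ∈ Finset.Ico 1 T, ∑ i, lam s ω i * ∑ t ∈ Finset.Icc 1 s, D t ω i
        ≤ ∑ s ∈ Finset.Ico 1 T, ∑ i, lam s ω i * (V1 i + ∑ u ∈ Finset.Ico 1 s, R u ω i) :=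
      Finset.sum_le_sum fun s hs => Finset.sum_le_sum fun i _ =>
        mul_le_mul_of_nonneg_left (hcum s hs i)
          (((hpos s (htI s hs).1 (htI s hs).2).2 i).2.1)
    have hW : -(∑ s ∈ Finset.Ico 1 T, ∑ i, w s ω i * ∑ t ∈ Finset.Ico 1 s, D t ω i)
        ≤ ∑ s ∈ Finset.Ico 1 T, ∑ i, w s ω i * (m i - V1 i - ∑ u ∈ Finset.Ico 1 s, R u ω i) := by
      calc -(∑ s ∈ Finset.Ico 1 T, ∑ i, w s ω i * ∑ t ∈ Finset.Ico 1 s, D t ω i)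
          = ∑ s ∈ Finset.Ico 1 T, ∑ i, w s ω i * -(∑ t ∈ Finset.Ico 1 s, D t ω i) := by
            simp [mul_neg]
        _ ≤ _ := Finset.sum_le_sum fun s hs => Finset.sum_le_sum fun i _ =>
            mul_le_mul_of_nonneg_left (hcum2 s hs i)
              (((hpos s (htI s hs).1 (htI s hs).2).2 i).2.2)
    have hKsplit : ∑ t ∈ Finset.Ico 1 T,
        (∑ i, lam t ω i * (V1 i + ∑ s ∈ Finset.Ico 1 t, R s ω i) + Ctil * v t ω
          + ∑ i, w t ω i * (m i - V1 i - ∑ s ∈ Finset.Ico 1 t, R s ω i))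
        = (∑ t ∈ Finset.Ico 1 T, ∑ i, lam t ω i * (V1 i + ∑ s ∈ Finset.Ico 1 t, R s ω i))
          + (∑ t ∈ Finset.Ico 1 T, Ctil * v t ω)
          + (∑ t ∈ Finset.Ico 1 T, ∑ i, w t ω i * (m i - V1 i - ∑ s ∈ Finset.Ico 1 t, R s ω i)) := by
      rw [Finset.sum_add_distrib, Finset.sum_add_distrib]
    linarith [e1, swapl, swapw, hαid, hG0, hVv, hL, hW, hKsplit]
  calc revenue P T S R V1 α D = ∫ ω, H ω ∂P := hrev
    _ ≤ ∫ ω, K ω ∂P := integral_mono_ae hHint hKint hae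
    _ = dualValueTotal P T S R V1 m Ctil α lam w v := hdual
end
end

section
/- Solution of the total-production dual problem in the martingale case: suppose α = 1, each coordinate process (S_i(t))_{t=1}^{T} is a martingale with respect to (G_t) and P, V(1) ≥ 0 componentwise, C̃ ≥ 0, R(t) ≥ 0 componentwise almost surely for all t, and m − V(1) − Σ_{s=1}^{t−1} R(s) ≥ 0 componentwise almost surely for all t = 1,…,T−1. Then the zero dual variable is total-production dual feasible, and every total-production dual feasible variable y satisfies Φ̃(y) ≥ E[S(T)·V(1) + Σ_{t=1}^{T−1} S(T)·R(t)]; hence the optimal value of the total-production dual problem is d* = E[S(T)·V(1) + Σ_{t=1}^{T−1} S(T)·R(t)], attained at y = 0. -/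
open MeasureTheory Finset

noncomputable section

/-- **Solution of the total-production dual problem in the martingale case**:
if `α = 1`, the price process is a coordinatewise martingale w.r.t. `(G_t)`,
`V(1) ≥ 0`, `C̃ ≥ 0`, `R(t) ≥ 0` a.s., and a.s. no dam would flood even without
draining, then the zero dual variable is total-production dual feasible with value
`d* = E[S(T)·V(1) + ∑_{t=1}^{T-1} S(T)·R(t)]`, and every total-production dual
feasible variable `y` satisfies `Φ̃(y) ≥ d*`; hence the optimal value of the
total-production dual problem is `d*`, attained at `y = 0`. -/
theorem dual_solution_total_martingale {Ω : Type*} {mΩ : MeasurableSpace Ω}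
    (P : Measure Ω) [IsProbabilityMeasure P]
    (T N : ℕ) (hT : 2 ≤ T) (hN : 1 ≤ N)
    (G : ℕ → MeasurableSpace Ω)
    (hG_mono : ∀ s t, s ≤ t → G s ≤ G t) (hG_le : ∀ t, G t ≤ mΩ)
    (S R : ℕ → Ω → Fin N → ℝ)
    (hS_adapted : ∀ t, 1 ≤ t → t ≤ T → Measurable[G t] (S t))
    (hS_bdd : ∃ C : ℝ, ∀ t ω i, |S t ω i| ≤ C)
    (hR_meas : ∀ t, Measurable (R t))
    (hR_bdd : ∃ C : ℝ, ∀ t ω i, |R t ω i| ≤ C)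
    (V1 m : Fin N → ℝ) (Ctil : ℝ) (α : ℝ) (hα : α = 1)
    (hmart : ∀ s t, 1 ≤ s → s ≤ t → t ≤ T → ∀ i,
      P[(fun ω => S t ω i)|G s] =ᵐ[P] fun ω => S s ω i)
    (hV1 : ∀ i, 0 ≤ V1 i) (hC : 0 ≤ Ctil)
    (hR_nonneg : ∀ᵐ ω ∂P, ∀ t, 1 ≤ t → t ≤ T - 1 → ∀ i, 0 ≤ R t ω i)
    (hno_flood : ∀ᵐ ω ∂P, ∀ t, 1 ≤ t → t ≤ T - 1 → ∀ i,
      0 ≤ m i - V1 i - ∑ s ∈ Finset.Ico 1 t, R s ω i) :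
    DualFeasibleTotal P T G S α
        (fun _ _ _ => 0) (fun _ _ _ => 0) (fun _ _ _ => 0) (fun _ _ => 0) ∧
    dualValueTotal P T S R V1 m Ctil α
        (fun _ _ _ => 0) (fun _ _ _ => 0) (fun _ _ => 0)
      = ∫ ω, (∑ i, S T ω i * V1 i
          + ∑ t ∈ Finset.Ico 1 T, ∑ i, S T ω i * R t ω i) ∂P ∧
    ∀ (gam lam w : ℕ → Ω → Fin N → ℝ) (v : ℕ → Ω → ℝ),
      IsDualVariableTotal P T gam lam w v →
      DualFeasibleTotal P T G S α gam lam w v →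
      ∫ ω, (∑ i, S T ω i * V1 i
          + ∑ t ∈ Finset.Ico 1 T, ∑ i, S T ω i * R t ω i) ∂P
        ≤ dualValueTotal P T S R V1 m Ctil α lam w v := by

  obtain ⟨C, hCb⟩ := hS_bdd
  have hSint : ∀ t, 1 ≤ t → t ≤ T → ∀ i, Integrable (fun ω => S t ω i) P := by
    intro t ht1 ht2 i
    have hm : Measurable fun ω => S t ω i :=
      (measurable_pi_apply i).comp ((hS_adapted t ht1 ht2).mono (hG_le t) le_rfl)
    exact (integrable_const C).mono' hm.aestronglyMeasurable
      (Filter.Eventually.of_forall fun ω => by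
        simpa [Real.norm_eq_abs] using hCb t ω i)
  refine ⟨?_, ?_, ?_⟩
  · intro t ht1 ht2 i A hA
    have ht2' : t + 1 ≤ T := by omega
    have hA' : MeasurableSet[G (t + 1)] A := hG_mono t (t + 1) (by omega) A hA
    have h1 := hmart (t + 1) T (by omega) ht2' le_rfl i
    have hintT := hSint T (by omega) le_rfl i
    have hset := MeasureTheory.setIntegral_condExp (hG_le (t + 1)) hintT hA'
    have h2 : ∫ ω in A, S (t + 1) ω i ∂P = ∫ ω in A, S T ω i ∂P := by
      rw [← hset]
      exact setIntegral_congr_ae ((hG_le (t + 1)) A hA')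
        (h1.mono fun ω hω _ => hω.symm)
    have key : ∫ ω in A, (S (t + 1) ω i - S T ω i) ∂P = 0 := by
      rw [integral_sub ((hSint (t + 1) (by omega) ht2' i).integrableOn)
        (hintT.integrableOn), h2, sub_self]
    simpa [hα] using key
  · simp [dualValueTotal, hα]
  · intro gam lam w v hy hfeas
    obtain ⟨hint, hae⟩ := hy
    unfold dualValueTotal
    rw [hα, one_mul]
    refine le_add_of_nonneg_right (Finset.sum_nonneg fun t ht => ?_)
    rw [Finset.mem_Ico] at ht
    apply integral_nonneg_of_ae
    filter_upwards [hae, hR_nonneg, hno_flood] with ω h1 h2 h3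
    have ht1 : 1 ≤ t := ht.1
    have ht2 : t ≤ T - 1 := by omega
    obtain ⟨hv, hrest⟩ := h1 t ht1 ht2
    refine add_nonneg (add_nonneg ?_ (mul_nonneg hC hv)) ?_
    · refine Finset.sum_nonneg fun i _ => mul_nonneg (hrest i).2.1 ?_
      refine add_nonneg (hV1 i) (Finset.sum_nonneg fun s hs => ?_)
      rw [Finset.mem_Ico] at hs
      exact h2 s hs.1 (by omega) i
    · exact Finset.sum_nonneg fun i _ => mul_nonneg (hrest i).2.2 (h3 t ht1 ht2 i)
end
end

section
/- Revenue identity for the two-dam network in the martingale case with identical prices: suppose the two dams have the same scalar price process S = (S(t))_{t=1}^{T}, which is bounded, adapted to (G_t) and a martingale with respect to (G_t) and P, and take α = 1. Let D_1, D_2, T̄, O be admissible controls (each of D_1(t), D_2(t), T̄(t), O(t) : Ω → ℝ is G_t-measurable and bounded for t = 1,…,T−1), with induced water levels V_1(t) = V_1(1) + Σ_{s=1}^{t−1} (R_1(s) − D_1(s) − T̄(s)) and V_2(t) = V_2(1) + Σ_{s=1}^{t−1} (R_2(s) + T̄(s) − D_2(s) − O(s)). Then E[Σ_{t=1}^{T−1}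 (D_1(t) + D_2(t)) S(t+1) + S(T)(V_1(T) + V_2(T))] = E[S(T)(V_1(1) + V_2(1)) + Σ_{t=1}^{T−1} S(T)(R_1(t) + R_2(t))] − Σ_{t=1}^{T−1} E[O(t) S(T)]. In particular, if in addition S(T) ≥ 0 almost surely and O(t) ≥ 0 almost surely for all t, the expected revenue is at most d* := E[S(T)(V_1(1) + V_2(1)) + Σ_{t=1}^{T−1} S(T)(R_1(t) + R_2(t))]. -/
open MeasureTheory Finset

noncomputable section

/-- Water level of dam 1 in the two-dam network:
`V₁(t) = V₁(1) + ∑_{s=1}^{t-1} (R₁(s) - D₁(s) - T̄(s))`. -/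
def waterLevel1 {Ω : Type*} (V11 : ℝ) (R1 D1 Tbar : ℕ → Ω → ℝ)
    (t : ℕ) (ω : Ω) : ℝ :=
  V11 + ∑ s ∈ Finset.Ico 1 t, (R1 s ω - D1 s ω - Tbar s ω)

/-- Water level of dam 2 in the two-dam network:
`V₂(t) = V₂(1) + ∑_{s=1}^{t-1} (R₂(s) + T̄(s) - D₂(s) - O(s))`. -/
def waterLevel2 {Ω : Type*} (V21 : ℝ) (R2 D2 Tbar O : ℕ → Ω → ℝ)
    (t : ℕ) (ω : Ω) : ℝ :=
  V21 + ∑ s ∈ Finset.Ico 1 t, (R2 s ω + Tbar s ω - D2 s ω - O s ω)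

/-- A bounded a.e.-strongly measurable function is integrable w.r.t. a finite measure. -/
lemma bddInt {Ω : Type*} {mΩ : MeasurableSpace Ω} (P : Measure Ω) [IsFiniteMeasure P]
    {f : Ω → ℝ} (hf : AEStronglyMeasurable f P) {C : ℝ} (h : ∀ ω, |f ω| ≤ C) :
    Integrable f P :=
  (integrable_const C).mono' hf (Filter.Eventually.of_forall fun ω => by
    simpa [Real.norm_eq_abs] using h ω)

/-- Product of two bounded a.e.-strongly measurable functions is integrable. -/
lemma bddMulInt {Ω : Type*} {mΩ : MeasurableSpace Ω} (P : Measure Ω) [IsFiniteMeasure P]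
    {f g : Ω → ℝ} (hf : AEStronglyMeasurable f P) (hg : AEStronglyMeasurable g P)
    {Cf Cg : ℝ} (hCf : ∀ ω, |f ω| ≤ Cf) (hCg : ∀ ω, |g ω| ≤ Cg) :
    Integrable (fun ω => f ω * g ω) P :=
  bddInt P (hf.mul hg) (C := Cf * Cg) fun ω => by
    rw [abs_mul]
    exact mul_le_mul (hCf ω) (hCg ω) (abs_nonneg _) ((abs_nonneg _).trans (hCf ω))

/-- If `X` is `m`-measurable and `P[Y|m] =ᵐ Z`, then `∫ X·Y = ∫ X·Z`. -/
lemma keyMul {Ω : Type*} {mΩ : MeasurableSpace Ω} (P : Measure Ω) [IsProbabilityMeasure P]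
    {m : MeasurableSpace Ω} (hm : m ≤ mΩ) {X Y Z : Ω → ℝ}
    (hX : Measurable[m] X)
    (hY : Integrable Y P) (hXY : Integrable (fun ω => X ω * Y ω) P)
    (hZ : P[Y|m] =ᵐ[P] Z) :
    ∫ ω, X ω * Y ω ∂P = ∫ ω, X ω * Z ω ∂P := by
  have h1 : P[(fun ω => X ω * Y ω)|m] =ᵐ[P] fun ω => X ω * (P[Y|m]) ω :=
    condExp_mul_of_stronglyMeasurable_left hX.stronglyMeasurable hXY hY
  calc ∫ ω, X ω * Y ω ∂P = ∫ ω, (P[(fun ω => X ω * Y ω)|m]) ω ∂P :=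
        (integral_condExp hm).symm
    _ = ∫ ω, X ω * (P[Y|m]) ω ∂P := integral_congr_ae h1
    _ = ∫ ω, X ω * Z ω ∂P := integral_congr_ae (hZ.mono fun ω h => by dsimp only; rw [h])

/-- **Revenue identity for the two-dam network in the martingale case with
identical prices**: if the common scalar price process is a bounded adapted
martingale and `α = 1`, then for all admissible controls `D₁, D₂, T̄, O`,
`E[∑_{t=1}^{T-1} (D₁(t)+D₂(t)) S(t+1) + S(T)(V₁(T)+V₂(T))]
 = E[S(T)(V₁(1)+V₂(1)) + ∑_{t=1}^{T-1} S(T)(R₁(t)+R₂(t))] - ∑_{t=1}^{T-1} E[O(t) S(T)]`;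
in particular, if moreover `S(T) ≥ 0` a.s. and `O(t) ≥ 0` a.s. for all `t`, the
expected revenue is at most
`d* = E[S(T)(V₁(1)+V₂(1)) + ∑_{t=1}^{T-1} S(T)(R₁(t)+R₂(t))]`. -/
theorem two_dam_revenue_martingale {Ω : Type*} {mΩ : MeasurableSpace Ω}
    (P : Measure Ω) [IsProbabilityMeasure P]
    (T : ℕ) (hT : 2 ≤ T)
    (G : ℕ → MeasurableSpace Ω)
    (hG_mono : ∀ s t, s ≤ t → G s ≤ G t) (hG_le : ∀ t, G t ≤ mΩ)
    (S : ℕ → Ω → ℝ)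
    (hS_adapted : ∀ t, 1 ≤ t → t ≤ T → Measurable[G t] (S t))
    (hS_bdd : ∃ C : ℝ, ∀ t ω, |S t ω| ≤ C)
    (hmart : ∀ s t, 1 ≤ s → s ≤ t → t ≤ T →
      P[(S t)|G s] =ᵐ[P] S s)
    (α : ℝ) (hα : α = 1)
    (R1 R2 : ℕ → Ω → ℝ)
    (hR_meas : ∀ t, Measurable (R1 t) ∧ Measurable (R2 t))
    (hR_bdd : ∃ C : ℝ, ∀ t ω, |R1 t ω| ≤ C ∧ |R2 t ω| ≤ C)
    (V11 V21 : ℝ)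
    (D1 D2 Tbar O : ℕ → Ω → ℝ)
    (hadm : ∀ t, 1 ≤ t → t ≤ T - 1 →
      (Measurable[G t] (D1 t) ∧ Measurable[G t] (D2 t) ∧
        Measurable[G t] (Tbar t) ∧ Measurable[G t] (O t)) ∧
      ∃ C : ℝ, ∀ ω, |D1 t ω| ≤ C ∧ |D2 t ω| ≤ C ∧ |Tbar t ω| ≤ C ∧ |O t ω| ≤ C) :
    (∫ ω, (∑ t ∈ Finset.Ico 1 T, (D1 t ω + D2 t ω) * S (t + 1) ω
        + α * S T ω * (waterLevel1 V11 R1 D1 Tbar T ω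
            + waterLevel2 V21 R2 D2 Tbar O T ω)) ∂P
      = ∫ ω, (S T ω * (V11 + V21)
          + ∑ t ∈ Finset.Ico 1 T, S T ω * (R1 t ω + R2 t ω)) ∂P
        - ∑ t ∈ Finset.Ico 1 T, ∫ ω, O t ω * S T ω ∂P) ∧
    ((∀ᵐ ω ∂P, 0 ≤ S T ω) →
      (∀ᵐ ω ∂P, ∀ t, 1 ≤ t → t ≤ T - 1 → 0 ≤ O t ω) →
      ∫ ω, (∑ t ∈ Finset.Ico 1 T, (D1 t ω + D2 t ω) * S (t + 1) ω
          + α * S T ω * (waterLevel1 V11 R1 D1 Tbar T ω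
              + waterLevel2 V21 R2 D2 Tbar O T ω)) ∂P
        ≤ ∫ ω, (S T ω * (V11 + V21)
            + ∑ t ∈ Finset.Ico 1 T, S T ω * (R1 t ω + R2 t ω)) ∂P) := by
  subst hα
  obtain ⟨CS, hCS⟩ := hS_bdd
  obtain ⟨CR, hCR⟩ := hR_bdd
  have hSm : ∀ t, 1 ≤ t → t ≤ T → Measurable (S t) := fun t h1 h2 =>
    (hS_adapted t h1 h2).mono (hG_le t) le_rfl
  have hST : Measurable (S T) := hSm T (by omega) le_rfl
  have hmem : ∀ t ∈ Finset.Ico 1 T, 1 ≤ t ∧ t ≤ T - 1 := fun t ht => by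
    rw [Finset.mem_Ico] at ht; omega
  -- Integrability of the "d*" integrand
  have intG : Integrable (fun ω => S T ω * (V11 + V21)
      + ∑ t ∈ Finset.Ico 1 T, S T ω * (R1 t ω + R2 t ω)) P := by
    refine Integrable.add ((bddInt P hST.aestronglyMeasurable (hCS T)).mul_const _) ?_
    refine integrable_finset_sum _ fun t _ => ?_
    exact bddMulInt P hST.aestronglyMeasurable
      (((hR_meas t).1.add (hR_meas t).2).aestronglyMeasurable) (hCS T)
      (fun ω => (abs_add_le _ _).trans (add_le_add (hCR t ω).1 (hCR t ω).2))
  -- Integrability of the correction terms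
  have intF : ∀ t ∈ Finset.Ico 1 T,
      Integrable (fun ω => (D1 t ω + D2 t ω) * (S (t + 1) ω - S T ω)) P := by
    intro t ht
    obtain ⟨h1, h2⟩ := hmem t ht
    obtain ⟨⟨m1, m2, _, _⟩, C, hC⟩ := hadm t h1 h2
    exact bddMulInt P
      (((m1.mono (hG_le t) le_rfl).add (m2.mono (hG_le t) le_rfl)).aestronglyMeasurable)
      (((hSm (t + 1) (by omega) (by omega)).sub hST).aestronglyMeasurable)
      (fun ω => (abs_add_le _ _).trans (add_le_add (hC ω).1 (hC ω).2.1))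
      (fun ω => by
        rw [sub_eq_add_neg]
        exact (abs_add_le _ _).trans (by rw [abs_neg]; exact add_le_add (hCS _ _) (hCS _ _)))
  have intOS : ∀ t ∈ Finset.Ico 1 T, Integrable (fun ω => O t ω * S T ω) P := by
    intro t ht
    obtain ⟨h1, h2⟩ := hmem t ht
    obtain ⟨⟨_, _, _, m4⟩, C, hC⟩ := hadm t h1 h2
    exact bddMulInt P ((m4.mono (hG_le t) le_rfl).aestronglyMeasurable)
      hST.aestronglyMeasurable (fun ω => (hC ω).2.2.2) (hCS T)
  -- The martingale property kills the correction terms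
  have hF0 : ∀ t ∈ Finset.Ico 1 T,
      ∫ ω, (D1 t ω + D2 t ω) * (S (t + 1) ω - S T ω) ∂P = 0 := by
    intro t ht
    obtain ⟨h1, h2⟩ := hmem t ht
    obtain ⟨⟨m1, m2, _, _⟩, C, hC⟩ := hadm t h1 h2
    have hXmG : Measurable[G (t + 1)] (fun ω => D1 t ω + D2 t ω) :=
      (m1.mono (hG_mono t (t + 1) (Nat.le_succ t)) le_rfl).add
        (m2.mono (hG_mono t (t + 1) (Nat.le_succ t)) le_rfl)
    have hXamb : Measurable (fun ω => D1 t ω + D2 t ω) :=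
      (m1.mono (hG_le t) le_rfl).add (m2.mono (hG_le t) le_rfl)
    have hXb : ∀ ω, |D1 t ω + D2 t ω| ≤ C + C := fun ω =>
      (abs_add_le _ _).trans (add_le_add (hC ω).1 (hC ω).2.1)
    have intXST : Integrable (fun ω => (D1 t ω + D2 t ω) * S T ω) P :=
      bddMulInt P hXamb.aestronglyMeasurable hST.aestronglyMeasurable hXb (hCS T)
    have intXS1 : Integrable (fun ω => (D1 t ω + D2 t ω) * S (t + 1) ω) P :=
      bddMulInt P hXamb.aestronglyMeasurable
        ((hSm (t + 1) (by omega) (by omega)).aestronglyMeasurable) hXb (hCS (t + 1))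
    have e2 : ∫ ω, (D1 t ω + D2 t ω) * S T ω ∂P
        = ∫ ω, (D1 t ω + D2 t ω) * S (t + 1) ω ∂P :=
      keyMul P (hG_le (t + 1)) hXmG (bddInt P hST.aestronglyMeasurable (hCS T)) intXST
        (hmart (t + 1) T (by omega) (by omega) le_rfl)
    have e1 : ∫ ω, (D1 t ω + D2 t ω) * (S (t + 1) ω - S T ω) ∂P
        = ∫ ω, (D1 t ω + D2 t ω) * S (t + 1) ω ∂P
          - ∫ ω, (D1 t ω + D2 t ω) * S T ω ∂P := by
      simp only [mul_sub]
      exact integral_sub intXS1 intXST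
    rw [e1, e2, sub_self]
  -- The water levels sum up nicely (the transfer cancels)
  have hw : ∀ ω, waterLevel1 V11 R1 D1 Tbar T ω + waterLevel2 V21 R2 D2 Tbar O T ω
      = (V11 + V21) + ∑ t ∈ Finset.Ico 1 T,
          (R1 t ω + R2 t ω - D1 t ω - D2 t ω - O t ω) := by
    intro ω
    simp only [waterLevel1, waterLevel2]
    rw [add_add_add_comm, ← Finset.sum_add_distrib]
    congr 1
    exact Finset.sum_congr rfl fun s _ => by ring
  -- Pointwise decomposition of the revenue integrand
  have hpt : ∀ ω, (∑ t ∈ Finset.Ico 1 T, (D1 t ω + D2 t ω) * S (t + 1) ω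
        + 1 * S T ω * (waterLevel1 V11 R1 D1 Tbar T ω + waterLevel2 V21 R2 D2 Tbar O T ω))
      = (S T ω * (V11 + V21) + ∑ t ∈ Finset.Ico 1 T, S T ω * (R1 t ω + R2 t ω))
        + ∑ t ∈ Finset.Ico 1 T, (D1 t ω + D2 t ω) * (S (t + 1) ω - S T ω)
        - ∑ t ∈ Finset.Ico 1 T, O t ω * S T ω := by
    intro ω
    have h1 : ∑ t ∈ Finset.Ico 1 T, S T ω * (R1 t ω + R2 t ω - D1 t ω - D2 t ω - O t ω)
        = ∑ t ∈ Finset.Ico 1 T, S T ω * (R1 t ω + R2 t ω)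
          - ∑ t ∈ Finset.Ico 1 T, S T ω * (D1 t ω + D2 t ω)
          - ∑ t ∈ Finset.Ico 1 T, O t ω * S T ω := by
      rw [← Finset.sum_sub_distrib, ← Finset.sum_sub_distrib]
      exact Finset.sum_congr rfl fun t _ => by ring
    have h2 : ∑ t ∈ Finset.Ico 1 T, (D1 t ω + D2 t ω) * (S (t + 1) ω - S T ω)
        = ∑ t ∈ Finset.Ico 1 T, (D1 t ω + D2 t ω) * S (t + 1) ω
          - ∑ t ∈ Finset.Ico 1 T, S T ω * (D1 t ω + D2 t ω) := by
      rw [← Finset.sum_sub_distrib]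
      exact Finset.sum_congr rfl fun t _ => by ring
    rw [hw ω, one_mul, mul_add, Finset.mul_sum, h1, h2]
    ring
  have intFsum : Integrable (fun ω =>
      ∑ t ∈ Finset.Ico 1 T, (D1 t ω + D2 t ω) * (S (t + 1) ω - S T ω)) P :=
    integrable_finset_sum _ intF
  have intOSsum : Integrable (fun ω => ∑ t ∈ Finset.Ico 1 T, O t ω * S T ω) P :=
    integrable_finset_sum _ intOS
  have main : ∫ ω, (∑ t ∈ Finset.Ico 1 T, (D1 t ω + D2 t ω) * S (t + 1) ω
      + 1 * S T ω * (waterLevel1 V11 R1 D1 Tbar T ω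
          + waterLevel2 V21 R2 D2 Tbar O T ω)) ∂P
    = ∫ ω, (S T ω * (V11 + V21)
        + ∑ t ∈ Finset.Ico 1 T, S T ω * (R1 t ω + R2 t ω)) ∂P
      - ∑ t ∈ Finset.Ico 1 T, ∫ ω, O t ω * S T ω ∂P := by
    calc ∫ ω, (∑ t ∈ Finset.Ico 1 T, (D1 t ω + D2 t ω) * S (t + 1) ω
        + 1 * S T ω * (waterLevel1 V11 R1 D1 Tbar T ω
            + waterLevel2 V21 R2 D2 Tbar O T ω)) ∂P
        = ∫ ω, ((S T ω * (V11 + V21) + ∑ t ∈ Finset.Ico 1 T, S T ω * (R1 t ω + R2 t ω))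
            + ∑ t ∈ Finset.Ico 1 T, (D1 t ω + D2 t ω) * (S (t + 1) ω - S T ω)
            - ∑ t ∈ Finset.Ico 1 T, O t ω * S T ω) ∂P :=
          integral_congr_ae (Filter.Eventually.of_forall hpt)
      _ = (∫ ω, (S T ω * (V11 + V21)
            + ∑ t ∈ Finset.Ico 1 T, S T ω * (R1 t ω + R2 t ω)) ∂P
          + ∫ ω, (∑ t ∈ Finset.Ico 1 T, (D1 t ω + D2 t ω) * (S (t + 1) ω - S T ω)) ∂P)
          - ∫ ω, (∑ t ∈ Finset.Ico 1 T, O t ω * S T ω) ∂P := by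
          have intGF : Integrable (fun ω => (S T ω * (V11 + V21)
              + ∑ t ∈ Finset.Ico 1 T, S T ω * (R1 t ω + R2 t ω))
              + ∑ t ∈ Finset.Ico 1 T, (D1 t ω + D2 t ω) * (S (t + 1) ω - S T ω)) P :=
            intG.add intFsum
          rw [integral_sub intGF intOSsum, integral_add intG intFsum]
      _ = ∫ ω, (S T ω * (V11 + V21)
            + ∑ t ∈ Finset.Ico 1 T, S T ω * (R1 t ω + R2 t ω)) ∂P
          - ∑ t ∈ Finset.Ico 1 T, ∫ ω, O t ω * S T ω ∂P := by
          rw [integral_finset_sum _ intF, integral_finset_sum _ intOS,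
            Finset.sum_eq_zero hF0, add_zero]
  refine ⟨main, fun hS0 hO0 => ?_⟩
  rw [main]
  refine sub_le_self _ (Finset.sum_nonneg fun t ht => ?_)
  obtain ⟨h1, h2⟩ := hmem t ht
  refine integral_nonneg_of_ae ?_
  filter_upwards [hS0, hO0] with ω hs ho
  exact mul_nonneg (ho t h1 h2) hs
end
end

section
/- Let E be a real normed vector space and let φ : E → ℝ ∪ {+∞} be a convex function (its epigraph {(u, r) ∈ E × ℝ : φ(u) ≤ r} is a convex set) such that φ(0) is finite and φ is lower semicontinuous at 0. Then there is no duality gap at 0: sup over continuous linear functionals y : E → ℝ of ( inf_{u ∈ E} (φ(u) + y(u)) ) = φ(0), where the supremum and infimum are taken in ℝ ∪ {±∞}. -/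
open scoped Topology

/-- **Abstract no-duality-gap criterion of conjugate duality**: let `E` be a real
normed vector space and `φ : E → ℝ ∪ {+∞}` (formalized as an `EReal`-valued
function never taking the value `-∞`) be convex (its epigraph is convex), with
`φ 0` finite, and lower semicontinuous at `0`.  Then
`sup_{y ∈ E*} inf_{u ∈ E} (φ(u) + y(u)) = φ(0)`, the supremum being over
continuous linear functionals `y : E → ℝ` and the extrema taken in `ℝ ∪ {±∞}`. -/
theorem no_duality_gap_of_lsc_at_zero
    {E : Type*} [NormedAddCommGroup E] [NormedSpace ℝ E]
    (φ : E → EReal)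
    (hne_bot : ∀ u, φ u ≠ ⊥)
    (hconv : Convex ℝ {p : E × ℝ | φ p.1 ≤ (p.2 : EReal)})
    (hfin : ∃ r : ℝ, φ 0 = (r : EReal))
    (hlsc : LowerSemicontinuousAt φ 0) :
    ⨆ y : E →L[ℝ] ℝ, ⨅ u : E, (φ u + (y u : EReal)) = φ 0 := by
  obtain ⟨r₀, hr₀⟩ := hfin
  refine le_antisymm (iSup_le fun y => ?_) ?_
  · calc ⨅ u : E, (φ u + (y u : EReal)) ≤ φ 0 + (y 0 : EReal) := iInf_le _ 0
    _ = φ 0 := by simp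
  -- hard direction
  by_contra h
  push_neg at h
  obtain ⟨c, hXc, hcφ⟩ := EReal.exists_between_coe_real h
  -- lsc gives a ball where φ > c
  have hev : ∀ᶠ u in 𝓝 (0 : E), (c : EReal) < φ u := hlsc _ hcφ
  obtain ⟨ε, hε, hball⟩ := Metric.eventually_nhds_iff_ball.mp hev
  have hdisj : Disjoint (Metric.ball (0 : E) ε ×ˢ Set.Iio c)
      {p : E × ℝ | φ p.1 ≤ (p.2 : EReal)} := by
    rw [Set.disjoint_left]
    rintro ⟨u, r⟩ ⟨hu, hr⟩ hmem
    have h1 : (c : EReal) < φ u := hball u hu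
    have h2 : φ u ≤ (r : EReal) := hmem
    have : (c : EReal) < (r : EReal) := lt_of_lt_of_le h1 h2
    exact absurd (EReal.coe_lt_coe_iff.mp this) (not_lt.mpr hr.le)
  obtain ⟨f, s, hfS, hfepi⟩ := geometric_hahn_banach_open
    ((convex_ball (0:E) ε).prod (convex_Iio c)) ((Metric.isOpen_ball).prod isOpen_Iio)
    hconv hdisj
  set β : ℝ := f (0, 1) with hβ
  set g : E →L[ℝ] ℝ := f.comp (ContinuousLinearMap.inl ℝ E ℝ) with hg
  have hsplit : ∀ (u : E) (r : ℝ), f (u, r) = g u + r * β := by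
    intro u r
    have : (u, r) = (u, (0:ℝ)) + r • ((0:E), (1:ℝ)) := by
      simp [Prod.ext_iff]
    rw [this, map_add, map_smul]
    simp [hg, hβ, mul_comm]
  have h0epi : ((0:E), r₀) ∈ {p : E × ℝ | φ p.1 ≤ (p.2 : EReal)} := by
    simp [Set.mem_setOf_eq, hr₀]
  have hg0 : g 0 = 0 := by simp
  -- β ≥ 0
  have hβnonneg : 0 ≤ β := by
    by_contra hneg
    push_neg at hneg
    set t : ℝ := max r₀ (s / β) + 1 with htdef
    have hmem : ((0:E), t) ∈ {p : E × ℝ | φ p.1 ≤ (p.2 : EReal)} := by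
      simp only [Set.mem_setOf_eq, hr₀]
      exact_mod_cast le_trans (le_max_left r₀ (s / β)) (by linarith)
    have hle := hfepi _ hmem
    rw [hsplit, hg0, zero_add] at hle
    have h2 : s / β < t := by
      have := le_max_right r₀ (s / β); linarith
    have h3 : t * β < s / β * β := mul_lt_mul_of_neg_right h2 hneg
    rw [div_mul_cancel₀ s hneg.ne] at h3
    linarith
  -- β > 0
  have hβpos : 0 < β := by
    rcases lt_or_eq_of_le hβnonneg with h' | h'
    · exact h'
    · exfalso
      have h1 : f ((0:E), c - 1) < s := hfS _ (by constructor <;> simp [hε])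
      have h2 : s ≤ f ((0:E), r₀) := hfepi _ h0epi
      rw [hsplit, hg0, zero_add, ← h'] at h1 h2
      rw [mul_zero] at h1 h2
      linarith
  -- c * β ≤ s
  have hcβ : c * β ≤ s := by
    by_contra h'
    push_neg at h'
    set r : ℝ := (s / β + c) / 2 with hr
    have hsβ : s / β < c := by rw [div_lt_iff₀ hβpos]; linarith
    have hr1 : s / β < r := by rw [hr]; linarith
    have hr2 : r < c := by rw [hr]; linarith
    have := hfS ((0:E), r) (by constructor <;> simp [hε, hr2])
    rw [hsplit, hg0, zero_add] at this
    rw [div_lt_iff₀ hβpos] at hr1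
    linarith
  -- the dual variable
  have hkey : ∀ u : E, (c : EReal) ≤ φ u + ((β⁻¹ • g) u : EReal) := by
    intro u
    rcases eq_top_or_lt_top (φ u) with htop | hlt
    · rw [htop, EReal.top_add_coe]; exact le_top
    · lift φ u to ℝ using ⟨hlt.ne, hne_bot u⟩ with t ht
      have hmem : (u, t) ∈ {p : E × ℝ | φ p.1 ≤ (p.2 : EReal)} := ht.ge
      have h1 : s ≤ g u + t * β := by rw [← hsplit]; exact hfepi _ hmem
      have h2 : c ≤ t + (β⁻¹ • g) u := by
        have hnum : c * β ≤ t * β + g u := by linarith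
        have hyu : (β⁻¹ • g) u = β⁻¹ * g u := rfl
        rw [hyu, ← sub_nonneg]
        have heq : t + β⁻¹ * g u - c = (t * β + g u - c * β) / β := by
          field_simp
        rw [heq]
        exact div_nonneg (by linarith) hβpos.le
      calc (c : EReal) ≤ ((t + (β⁻¹ • g) u : ℝ) : EReal) := EReal.coe_le_coe_iff.mpr h2
      _ = (t : EReal) + (((β⁻¹ • g) u : ℝ) : EReal) := EReal.coe_add _ _
  have hfinal : (c : EReal) ≤ ⨆ y : E →L[ℝ] ℝ, ⨅ u : E, (φ u + (y u : EReal)) :=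
    le_trans (le_iInf hkey)
      (le_iSup (fun y : E →L[ℝ] ℝ => ⨅ u : E, (φ u + (y u : EReal))) (β⁻¹ • g))
  exact absurd (lt_of_le_of_lt hfinal hXc) (lt_irrefl _)
end
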